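/- arXiv:1101.5829 — 3 statements merged into one kernel-verified Lean document; each statement's English description precedes it below -/
import Mathlib

section
/- Let D be a division algebra over a field k, σ a k-algebra automorphism of D, δ a σ-derivation of D over k, and set ψ = (σ − 1) + δ and E = {u ∈ D : ψ(u) = 0}. Let b ∈ D. If (1) b ∉ σ(E), and (2) for all u ∈ D, ψ(u) ∈ σ(E) + σ(E)b implies u ∈ E, then the k-subalgebra of the quotient division ring D(x;σ,δ) generated by b(1−x)^{−1} and (1−x)^{−1} is free on those two generators. -/
open scoped BigOperators

/-- A `k`-algebra `R` satisfies a polynomial identity (with coefficients in `k`). -/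
def SatisfiesPI (k : Type*) [CommRing k] (R : Type*) [Ring R] [Algebra k R] : Prop :=
  ∃ (n : ℕ) (p : FreeAlgebra k (Fin n)), p ≠ 0 ∧
    ∀ f : Fin n → R, (FreeAlgebra.lift k f) p = 0

/-- `R` is locally PI over `k`: every finitely generated `k`-subalgebra satisfies a PI. -/
def LocallyPI (k : Type*) [CommRing k] (R : Type*) [Ring R] [Algebra k R] : Prop :=
  ∀ S : Subalgebra k R, S.FG → SatisfiesPI k S

/-- `R` contains a free `k`-subalgebra on two generators. -/
def ContainsFreeSubalgebra (k : Type*) [CommRing k] (R : Type*) [Ring R] [Algebra k R] :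
    Prop :=
  ∃ f : FreeAlgebra k (Fin 2) →ₐ[k] R, Function.Injective f

/-- `Q`, together with the embedding `i : A →ₐ[k] Q` and the element `x : Q`, is the quotient
division ring of the Ore extension `A[x; σ, δ]`: the relation `x a = σ(a) x + δ(a)` holds, the
powers of `x` are left linearly independent over `A`, and every element of `Q` is a right
fraction of two elements of the subalgebra generated by `A` and `x`. -/
structure IsOreQuotient (k : Type*) [CommRing k]
    (A : Type*) [Ring A] [Algebra k A]
    (σ : A →ₐ[k] A) (δ : A →ₗ[k] A)
    (Q : Type*) [DivisionRing Q] [Algebra k Q]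
    (i : A →ₐ[k] Q) (x : Q) : Prop where
  inj : Function.Injective i
  rel : ∀ a : A, x * i a = i (σ a) * x + i (δ a)
  indep : ∀ (n : ℕ) (c : ℕ → A),
    ∑ j ∈ Finset.range n, i (c j) * x ^ j = 0 → ∀ j < n, c j = 0
  den : ∀ q : Q, ∃ p r : Q, p ∈ Algebra.adjoin k (Set.range ⇑i ∪ {x}) ∧
    r ∈ Algebra.adjoin k (Set.range ⇑i ∪ {x}) ∧ r ≠ 0 ∧ q = p * r⁻¹


namespace BRMain

variable {k : Type*} [Field k] {D : Type*} [DivisionRing D] [Algebra k D]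
  {Q : Type*} [DivisionRing Q] [Algebra k Q]

section basic

variable (σ : D ≃ₐ[k] D) (δ : D →ₗ[k] D)

/-- ψ = σ - 1 + δ -/
def psi (a : D) : D := σ a - a + δ a

theorem psi_zero : psi σ δ 0 = 0 := by simp [psi]

theorem psi_neg (a : D) : psi σ δ (-a) = -psi σ δ a := by
  simp [psi]; abel

theorem delta_one (hδ : ∀ a b : D, δ (a * b) = σ a * δ b + δ a * b) : δ 1 = 0 := by
  have h := hδ 1 1
  simp at h
  exact h

theorem psi_one (hδ : ∀ a b : D, δ (a * b) = σ a * δ b + δ a * b) : psi σ δ 1 = 0 := by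
  simp [psi, delta_one σ δ hδ]

theorem psi_mul (hδ : ∀ a b : D, δ (a * b) = σ a * δ b + δ a * b) (u v : D) :
    psi σ δ (u * v) = σ u * psi σ δ v + psi σ δ u * v := by
  simp only [psi, map_mul, hδ]
  noncomm_ring

theorem psi_inv (hδ : ∀ a b : D, δ (a * b) = σ a * δ b + δ a * b) {u : D} (hu : u ≠ 0)
    (hE : psi σ δ u = 0) : psi σ δ u⁻¹ = 0 := by
  have h := psi_mul σ δ hδ u u⁻¹
  rw [mul_inv_cancel₀ hu, psi_one σ δ hδ, hE, zero_mul, add_zero] at h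
  have hσ : σ u ≠ 0 := by
    simp only [ne_eq, map_eq_zero_iff σ σ.injective]; exact hu
  exact (mul_eq_zero.mp h.symm).resolve_left hσ

theorem psi_algebraMap (hδ : ∀ a b : D, δ (a * b) = σ a * δ b + δ a * b) (μ : k) :
    psi σ δ (algebraMap k D μ) = 0 := by
  have h1 : σ (algebraMap k D μ) = algebraMap k D μ := σ.commutes μ
  have h2 : δ (algebraMap k D μ) = 0 := by
    rw [Algebra.algebraMap_eq_smul_one, map_smul, delta_one σ δ hδ, smul_zero]
  simp [psi, h1, h2]

end basic

section ore

variable (σ : D ≃ₐ[k] D) (δ : D →ₗ[k] D) (b : D) (i : D →ₐ[k] Q) (x : Q)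

theorem one_sub_ne (indep : ∀ (n : ℕ) (c : ℕ → D),
    ∑ j ∈ Finset.range n, i (c j) * x ^ j = 0 → ∀ j < n, c j = 0) :
    (1 : Q) - x ≠ 0 := by
  intro h
  have h2 := indep 2 (fun j => if j = 0 then 1 else -1) ?_ 0 (by norm_num)
  · simp at h2
  · rw [Finset.sum_range_succ, Finset.sum_range_succ, Finset.sum_range_zero]
    simpa [sub_eq_add_neg] using h

theorem key1 (rel : ∀ a : D, x * i a = i (σ a) * x + i (δ a)) (a : D) :
    (1 - x) * i a = i (σ a) * (1 - x) - i (psi σ δ a) := by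
  rw [sub_mul, one_mul, rel, psi]
  simp only [map_sub, map_add, mul_sub, mul_one]
  abel

/-- left polynomials in x over i(D) -/
def PolySet : Set Q := {q | ∃ (N : ℕ) (d : ℕ → D), q = ∑ j ∈ Finset.range N, i (d j) * x ^ j}

theorem pad_rep {N M : ℕ} (h : N ≤ M) (d : ℕ → D) :
    ∑ j ∈ Finset.range N, i (d j) * x ^ j
      = ∑ j ∈ Finset.range M, i (if j < N then d j else (0:D)) * x ^ j := by
  have h1 : ∑ j ∈ Finset.range N, i (d j) * x ^ j
      = ∑ j ∈ Finset.range N, i (if j < N then d j else (0:D)) * x ^ j :=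
    Finset.sum_congr rfl (fun j hj => by rw [if_pos (Finset.mem_range.mp hj)])
  rw [h1]
  exact Finset.sum_subset (Finset.range_subset_range.mpr h) (fun j _ hj => by
    rw [Finset.mem_range, not_lt] at hj
    rw [if_neg (not_lt.mpr hj), map_zero, zero_mul])

theorem poly_mem_pad {q : Q} (hq : q ∈ PolySet i x) :
    ∃ (N : ℕ) (d : ℕ → D), (∀ j, N ≤ j → d j = 0) ∧
      q = ∑ j ∈ Finset.range N, i (d j) * x ^ j := by
  obtain ⟨N, d, rfl⟩ := hq
  refine ⟨N, fun j => if j < N then d j else 0, fun j hj => if_neg (not_lt.mpr hj), ?_⟩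
  exact pad_rep i x le_rfl d

theorem poly_zero : (0 : Q) ∈ PolySet i x := ⟨0, fun _ => 0, by simp⟩

theorem poly_monomial (a : D) (n : ℕ) : i a * x ^ n ∈ PolySet i x := by
  refine ⟨n + 1, fun j => if j = n then a else 0, ?_⟩
  rw [Finset.sum_eq_single n]
  · simp
  · intro j _ hj; simp [hj]
  · intro h; exact absurd (Finset.self_mem_range_succ n) h

theorem poly_const (a : D) : (i a : Q) ∈ PolySet i x := by
  simpa using poly_monomial i x a 0

theorem poly_add {q r : Q} (hq : q ∈ PolySet i x) (hr : r ∈ PolySet i x) :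
    q + r ∈ PolySet i x := by
  obtain ⟨N, d, rfl⟩ := hq
  obtain ⟨M, e, rfl⟩ := hr
  refine ⟨max N M, fun j => (if j < N then d j else 0) + (if j < M then e j else 0), ?_⟩
  rw [pad_rep i x (le_max_left N M) d, pad_rep i x (le_max_right N M) e,
    ← Finset.sum_add_distrib]
  refine Finset.sum_congr rfl fun j _ => ?_
  rw [map_add, add_mul]

theorem poly_imul (a : D) {q : Q} (hq : q ∈ PolySet i x) : i a * q ∈ PolySet i x := by
  obtain ⟨N, d, rfl⟩ := hq
  refine ⟨N, fun j => a * d j, ?_⟩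
  rw [Finset.mul_sum]
  refine Finset.sum_congr rfl fun j _ => ?_
  rw [map_mul, mul_assoc]

theorem poly_neg {q : Q} (hq : q ∈ PolySet i x) : -q ∈ PolySet i x := by
  have := poly_imul i x (-1) hq
  simpa using this

theorem poly_sub {q r : Q} (hq : q ∈ PolySet i x) (hr : r ∈ PolySet i x) :
    q - r ∈ PolySet i x := by
  rw [sub_eq_add_neg]; exact poly_add i x hq (poly_neg i x hr)

theorem poly_onesubx_mul (rel : ∀ a : D, x * i a = i (σ a) * x + i (δ a))
    {q : Q} (hq : q ∈ PolySet i x) : (1 - x) * q ∈ PolySet i x := by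
  obtain ⟨N, d, rfl⟩ := hq
  induction N with
  | zero => simpa using poly_zero i x
  | succ N ih =>
    rw [Finset.sum_range_succ, mul_add]
    refine poly_add i x ih ?_
    have h1 : (1 - x) * (i (d N) * x ^ N)
        = i (σ (d N)) * x ^ N - i (σ (d N)) * x ^ (N+1) - i (psi σ δ (d N)) * x ^ N := by
      rw [← mul_assoc, key1 σ δ i x rel, pow_succ']
      noncomm_ring
    rw [h1]
    exact poly_sub i x (poly_sub i x (poly_monomial i x _ N) (poly_monomial i x _ (N+1)))
      (poly_monomial i x _ N)

theorem poly_base (hne : (1:Q) - x ≠ 0)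
    (rel : ∀ a : D, x * i a = i (σ a) * x + i (δ a))
    (indep : ∀ (n : ℕ) (c : ℕ → D),
      ∑ j ∈ Finset.range n, i (c j) * x ^ j = 0 → ∀ j < n, c j = 0)
    {q : Q} (hq : q ∈ PolySet i x) {c : D} (h : q + i c * (1 - x)⁻¹ = 0) : c = 0 := by
  by_contra hc
  have hy : (1 - x)⁻¹ = i c⁻¹ * (-q) := by
    have h1 : i c * (1 - x)⁻¹ = -q := eq_neg_of_add_eq_zero_right h
    calc (1 - x)⁻¹ = i (c⁻¹ * c) * (1 - x)⁻¹ := by rw [inv_mul_cancel₀ hc, map_one, one_mul]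
    _ = i c⁻¹ * (i c * (1 - x)⁻¹) := by rw [map_mul, mul_assoc]
    _ = i c⁻¹ * (-q) := by rw [h1]
  have hyP : (1 - x)⁻¹ ∈ PolySet i x := by
    rw [hy]; exact poly_imul i x _ (poly_neg i x hq)
  obtain ⟨N, d, hd0, hdrep⟩ := poly_mem_pad i x hyP
  have hinv : (1 - x) * (1 - x)⁻¹ = 1 := mul_inv_cancel₀ hne
  set E : ℕ → D := fun j =>
    (σ (d j) - psi σ δ (d j)) - (if j = 0 then 1 else σ (d (j-1))) with hEdef
  have hterm : ∀ (a : D) (j : ℕ), (1 - x) * (i a * x ^ j)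
      = i (σ a - psi σ δ a) * x ^ j - i (σ a) * x ^ (j+1) := by
    intro a j
    rw [← mul_assoc, key1 σ δ i x rel, pow_succ']
    simp only [map_sub]
    noncomm_ring
  have hEsum : ∑ j ∈ Finset.range (N+1), i (E j) * x ^ j = 0 := by
    have hsplit : ∀ j, i (E j) * x ^ j
        = i (σ (d j) - psi σ δ (d j)) * x ^ j
          - i (if j = 0 then (1:D) else σ (d (j-1))) * x ^ j := by
      intro j; rw [hEdef]; simp only [map_sub, sub_mul]
    rw [Finset.sum_congr rfl fun j _ => hsplit j, Finset.sum_sub_distrib]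
    have c1 : ∑ j ∈ Finset.range (N+1), i (if j = 0 then (1:D) else σ (d (j-1))) * x ^ j
        = (∑ j ∈ Finset.range N, i (σ (d j)) * x ^ (j+1)) + 1 := by
      rw [Finset.sum_range_succ']
      simp
    have c2 : ∑ j ∈ Finset.range (N+1), i (σ (d j) - psi σ δ (d j)) * x ^ j
        = ∑ j ∈ Finset.range N, i (σ (d j) - psi σ δ (d j)) * x ^ j := by
      rw [Finset.sum_range_succ, hd0 N le_rfl]
      simp [psi]
    rw [c1, c2]
    have c3 : (∑ j ∈ Finset.range N, i (σ (d j) - psi σ δ (d j)) * x ^ j)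
        - ∑ j ∈ Finset.range N, i (σ (d j)) * x ^ (j+1) = (1 - x) * (1 - x)⁻¹ := by
      rw [hdrep, Finset.mul_sum, ← Finset.sum_sub_distrib]
      exact Finset.sum_congr rfl fun j _ => (hterm (d j) j).symm
    rw [← sub_sub, c3, hinv, sub_self]
  have hE := indep (N+1) E hEsum
  have hzero : ∀ t j, N ≤ j + t → d j = 0 := by
    intro t
    induction t with
    | zero => intro j hj; exact hd0 j (by simpa using hj)
    | succ t ih =>
      intro j hj
      by_cases hcase : N ≤ j + t
      · exact ih j hcase
      · have h1 : d (j+1) = 0 := ih (j+1) (by omega)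
        have h2 := hE (j+1) (by omega)
        rw [hEdef] at h2
        simp only [psi, h1, map_zero, sub_zero, zero_sub, zero_add, Nat.add_sub_cancel,
          if_neg (Nat.succ_ne_zero j), neg_eq_zero] at h2
        exact σ.injective (by rw [h2, map_zero])
  have hy0 : (1 - x)⁻¹ = 0 := by
    rw [hdrep]
    apply Finset.sum_eq_zero
    intro j hj
    rw [hzero N j (Nat.le_add_left N j), map_zero, zero_mul]
  exact hne (inv_eq_zero.mp hy0)

end ore

/-! ### words -/

def LB : ℕ → Finset (List Bool)
  | 0 => {[]}
  | (m+1) => {[]} ∪ ((LB m).image (List.cons false) ∪ (LB m).image (List.cons true))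

theorem mem_LB {m : ℕ} {l : List Bool} : l ∈ LB m ↔ l.length ≤ m := by
  induction m generalizing l with
  | zero =>
    simp only [LB, Finset.mem_singleton, Nat.le_zero, List.length_eq_zero_iff]
  | succ m ih =>
    cases l with
    | nil => simp [LB]
    | cons e f =>
      simp only [LB, Finset.mem_union, Finset.mem_singleton, Finset.mem_image,
        List.length_cons, Nat.add_le_add_iff_right]
      constructor
      · rintro (h | ⟨a, ha, rfl, rfl⟩ | ⟨a, ha, rfl, rfl⟩)
        · exact absurd h (by simp)
        · exact ih.mp ha
        · exact ih.mp ha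
      · intro h
        cases e
        · exact Or.inr (Or.inl ⟨f, ih.mpr h, rfl⟩)
        · exact Or.inr (Or.inr ⟨f, ih.mpr h, rfl⟩)

theorem LB_mono {m n : ℕ} (h : m ≤ n) : LB m ⊆ LB n := by
  intro l hl
  rw [mem_LB] at hl ⊢
  omega

theorem sum_LB_succ {M : Type*} [AddCommMonoid M] (m : ℕ) (g : List Bool → M) :
    ∑ l ∈ LB (m+1), g l
      = g [] + ((∑ f ∈ LB m, g (false :: f)) + ∑ f ∈ LB m, g (true :: f)) := by
  have d1 : Disjoint ((LB m).image (List.cons false)) ((LB m).image (List.cons true)) := by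
    rw [Finset.disjoint_left]
    intro l hl hl'
    obtain ⟨a, _, rfl⟩ := Finset.mem_image.mp hl
    obtain ⟨a', _, h⟩ := Finset.mem_image.mp hl'
    simp at h
  have d2 : Disjoint ({[]} : Finset (List Bool))
      ((LB m).image (List.cons false) ∪ (LB m).image (List.cons true)) := by
    rw [Finset.disjoint_left]
    rintro l hl h2
    rw [Finset.mem_singleton] at hl
    subst hl
    rcases Finset.mem_union.mp h2 with h | h <;>
      · obtain ⟨a, _, h⟩ := Finset.mem_image.mp h
        simp at h
  rw [LB, Finset.sum_union d2, Finset.sum_union d1, Finset.sum_singleton,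
    Finset.sum_image (fun a _ a' _ h => (List.cons.injEq _ _ _ _ ▸ h).2),
    Finset.sum_image (fun a _ a' _ h => (List.cons.injEq _ _ _ _ ▸ h).2)]

section words

variable (σ : D ≃ₐ[k] D) (δ : D →ₗ[k] D) (b : D) (i : D →ₐ[k] Q) (x : Q)

/-- the word b^{e₁} y b^{e₂} y ⋯ -/
def wrd : List Bool → Q
  | [] => 1
  | (e :: f) => (if e then i b else 1) * ((1 - x)⁻¹ * wrd f)

/-- sum of words of length ≤ m with left D-coefficients, each word preceded by y -/
def FF (m : ℕ) (c : List Bool → D) : Q :=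
  ∑ l ∈ LB m, i (c l) * ((1 - x)⁻¹ * wrd b i x l)

/-- the transformed coefficients after multiplying by (1-x) on the left -/
def TT (c : List Bool → D) : List Bool → D :=
  fun f => σ (c (false :: f)) + σ (c (true :: f)) * b - psi σ δ (c f)

theorem FF_collapse (m : ℕ) (c : List Bool → D)
    (h : ∀ l : List Bool, l.length = m + 1 → c l = 0) :
    FF b i x (m+1) c = FF b i x m c := by
  refine (Finset.sum_subset (LB_mono (Nat.le_succ m)) ?_).symm
  intro l hl hl'
  rw [mem_LB] at hl hl'
  have : l.length = m + 1 := by omega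
  rw [h l this, map_zero, zero_mul]

theorem FF_scale (m : ℕ) (c : List Bool → D) (a : D) :
    i a * FF b i x m c = FF b i x m (fun l => a * c l) := by
  rw [FF, FF, Finset.mul_sum]
  exact Finset.sum_congr rfl fun l _ => by rw [← mul_assoc, ← map_mul]

theorem step (hne : (1:Q) - x ≠ 0)
    (rel : ∀ a : D, x * i a = i (σ a) * x + i (δ a))
    (m : ℕ) (c : List Bool → D) (hsupp : ∀ l : List Bool, m + 1 < l.length → c l = 0) :
    (1 - x) * FF b i x (m+1) c = i (σ (c [])) + FF b i x (m+1) (TT σ δ b c) := by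
  have hinv : (1 - x) * (1 - x)⁻¹ = 1 := mul_inv_cancel₀ hne
  have hterm : ∀ (a : D) (l : List Bool), (1 - x) * (i a * ((1 - x)⁻¹ * wrd b i x l))
      = i (σ a) * wrd b i x l - i (psi σ δ a) * ((1 - x)⁻¹ * wrd b i x l) := by
    intro a l
    rw [← mul_assoc, key1 σ δ i x rel, sub_mul, mul_assoc, ← mul_assoc (1-x), hinv, one_mul]
  rw [FF, Finset.mul_sum]
  rw [Finset.sum_congr rfl fun l _ => hterm (c l) l, Finset.sum_sub_distrib]
  have hA : ∑ l ∈ LB (m+1), i (σ (c l)) * wrd b i x l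
      = i (σ (c []))
        + ∑ f ∈ LB (m+1), i (σ (c (false :: f)) + σ (c (true :: f)) * b)
            * ((1 - x)⁻¹ * wrd b i x f) := by
    rw [sum_LB_succ]
    congr 1
    · simp [wrd]
    have e1 : ∀ f : List Bool, i (σ (c (false :: f))) * wrd b i x (false :: f)
        = i (σ (c (false :: f))) * ((1 - x)⁻¹ * wrd b i x f) := by
      intro f; simp [wrd]
    have e2 : ∀ f : List Bool, i (σ (c (true :: f))) * wrd b i x (true :: f)
        = i (σ (c (true :: f)) * b) * ((1 - x)⁻¹ * wrd b i x f) := by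
      intro f
      simp only [wrd, if_pos, map_mul]
      rw [← mul_assoc, ← mul_assoc]
    rw [Finset.sum_congr rfl fun f _ => e1 f, Finset.sum_congr rfl fun f _ => e2 f,
      ← Finset.sum_add_distrib]
    have e3 : ∀ f : List Bool, i (σ (c (false :: f))) * ((1 - x)⁻¹ * wrd b i x f)
        + i (σ (c (true :: f)) * b) * ((1 - x)⁻¹ * wrd b i x f)
        = i (σ (c (false :: f)) + σ (c (true :: f)) * b) * ((1 - x)⁻¹ * wrd b i x f) := by
      intro f
      rw [map_add, add_mul, map_mul]
    rw [Finset.sum_congr rfl fun f _ => e3 f]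
    refine Finset.sum_subset (LB_mono (Nat.le_succ m)) ?_
    intro f hf hf'
    rw [mem_LB] at hf hf'
    have h1 : c (false :: f) = 0 := hsupp _ (by simp; omega)
    have h2 : c (true :: f) = 0 := hsupp _ (by simp; omega)
    rw [h1, h2, map_zero, zero_mul, add_zero, map_zero, zero_mul]
  rw [hA, add_sub_assoc]
  congr 1
  rw [FF, ← Finset.sum_sub_distrib]
  refine Finset.sum_congr rfl fun f _ => ?_
  rw [TT, map_sub, sub_mul, map_add, map_mul]

end words


section mainind

variable (σ : D ≃ₐ[k] D) (δ : D →ₗ[k] D) (b : D) (i : D →ₐ[k] Q) (x : Q)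

theorem main_ind
    (hδ : ∀ a b : D, δ (a * b) = σ a * δ b + δ a * b)
    (hb1 : b ∉ ⇑σ '' {u : D | σ u - u + δ u = 0})
    (hb2 : ∀ u : D,
      (∃ α ∈ ⇑σ '' {u : D | σ u - u + δ u = 0}, ∃ β ∈ ⇑σ '' {u : D | σ u - u + δ u = 0},
        σ u - u + δ u = α + β * b) → σ u - u + δ u = 0)
    (rel : ∀ a : D, x * i a = i (σ a) * x + i (δ a))
    (indep : ∀ (n : ℕ) (c : ℕ → D),
      ∑ j ∈ Finset.range n, i (c j) * x ^ j = 0 → ∀ j < n, c j = 0) :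
    ∀ (m : ℕ) (c : List Bool → D),
      (∀ l : List Bool, m < l.length → c l = 0) →
      (∃ q ∈ PolySet i x, q + FF b i x m c = 0) →
      ∀ l, c l = 0 := by
  have hne : (1:Q) - x ≠ 0 := one_sub_ne i x indep
  intro m
  induction m with
  | zero =>
    rintro c hsupp ⟨q, hqP, hq⟩ l
    rcases l with _ | ⟨e, f⟩
    · have hFF : FF b i x 0 c = i (c []) * (1 - x)⁻¹ := by
        rw [FF, show LB 0 = {[]} from rfl, Finset.sum_singleton]
        simp [wrd]
      rw [hFF] at hq
      exact poly_base σ δ i x hne rel indep hqP hq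
    · exact hsupp _ (by simp)
  | succ m ih =>
    have HRelT : ∀ c : List Bool → D, (∀ l : List Bool, m+1 < l.length → c l = 0) →
        (∃ q ∈ PolySet i x, q + FF b i x (m+1) c = 0) →
        ((∀ l : List Bool, m+1 < l.length → TT σ δ b c l = 0) ∧
          ∃ q ∈ PolySet i x, q + FF b i x (m+1) (TT σ δ b c) = 0) := by
      rintro c hsupp ⟨q, hqP, hq⟩
      constructor
      · intro l hl
        rw [TT, hsupp (false::l) (by simp; omega), hsupp (true::l) (by simp; omega),
          hsupp l hl]
        simp [psi]
      · refine ⟨(1-x)*q + i (σ (c [])),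
          poly_add i x (poly_onesubx_mul σ δ i x rel hqP) (poly_const i x _), ?_⟩
        have hstep := step σ δ b i x hne rel m c hsupp
        calc (1-x)*q + i (σ (c [])) + FF b i x (m+1) (TT σ δ b c)
            = (1-x)*q + ((1-x) * FF b i x (m+1) c) := by rw [add_assoc, ← hstep]
          _ = (1-x) * (q + FF b i x (m+1) c) := by rw [mul_add]
          _ = 0 := by rw [hq, mul_zero]
    have Hcollapse : ∀ c : List Bool → D, (∀ l : List Bool, m+1 < l.length → c l = 0) →
        (∃ q ∈ PolySet i x, q + FF b i x (m+1) c = 0) →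
        (∀ l : List Bool, l.length = m+1 → c l = 0) → ∀ l, c l = 0 := by
      rintro c hsupp ⟨q, hqP, hq⟩ htop
      refine ih c (fun l hl => ?_) ⟨q, hqP, ?_⟩
      · rcases Nat.lt_or_ge m l.length with h | h
        · rcases Nat.lt_or_ge (m+1) l.length with h' | h'
          · exact hsupp l h'
          · exact htop l (by omega)
        · omega
      · rwa [← FF_collapse b i x m c htop]
    have HclaimA : ∀ c : List Bool → D, (∀ l : List Bool, m+1 < l.length → c l = 0) →
        (∃ q ∈ PolySet i x, q + FF b i x (m+1) c = 0) →
        (∀ l : List Bool, l.length = m+1 → psi σ δ (c l) = 0) →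
        ∀ l : List Bool, l.length = m+1 → c l = 0 := by
      intro c hsupp hex hE
      obtain ⟨hsupp', hex'⟩ := HRelT c hsupp hex
      have htop' : ∀ l : List Bool, l.length = m+1 → TT σ δ b c l = 0 := by
        intro l hl
        rw [TT, hsupp (false::l) (by simp [hl]), hsupp (true::l) (by simp [hl]), hE l hl]
        simp
      have hTzero : ∀ l, TT σ δ b c l = 0 := Hcollapse _ hsupp' hex' htop'
      have hpair : ∀ f : List Bool, f.length = m → c (false::f) = 0 ∧ c (true::f) = 0 := by
        intro f hf
        have h2 := hTzero f
        rw [TT] at h2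
        have hψf : psi σ δ (c f) = σ (c (false::f)) + σ (c (true::f)) * b :=
          (sub_eq_zero.mp h2).symm
        have hfE : psi σ δ (c (false::f)) = 0 := hE _ (by simp [hf])
        have htE : psi σ δ (c (true::f)) = 0 := hE _ (by simp [hf])
        have hψ0 : psi σ δ (c f) = 0 :=
          hb2 (c f) ⟨σ (c (false::f)), ⟨c (false::f), hfE, rfl⟩,
            σ (c (true::f)), ⟨c (true::f), htE, rfl⟩, hψf⟩
        have hsum : σ (c (false::f)) + σ (c (true::f)) * b = 0 := by rw [← hψf, hψ0]
        by_cases h1 : c (true::f) = 0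
        · have h0 : σ (c (false::f)) = 0 := by
            rwa [h1, map_zero, zero_mul, add_zero] at hsum
          exact ⟨σ.injective (by rw [h0, map_zero]), h1⟩
        · exfalso
          have hσ1 : σ (c (true::f)) ≠ 0 := fun h =>
            h1 (σ.injective (by rw [h, map_zero]))
          set u := -((c (true::f))⁻¹ * c (false::f)) with hu
          have hσu : σ u = b := by
            have h3 : σ (c (true::f)) * b = -σ (c (false::f)) :=
              eq_neg_of_add_eq_zero_right hsum
            have h4 : σ (c (true::f)) * σ u = -σ (c (false::f)) := by
              rw [hu, map_neg, map_mul, map_inv₀, mul_neg, ← mul_assoc,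
                mul_inv_cancel₀ hσ1, one_mul]
            exact mul_left_cancel₀ hσ1 (h4.trans h3.symm)
          have huE : psi σ δ u = 0 := by
            rw [hu, psi_neg, psi_mul σ δ hδ, psi_inv σ δ hδ h1 htE, hfE]
            simp
          exact hb1 ⟨u, huE, hσu⟩
      intro l hl
      rcases l with _ | ⟨e, f⟩
      · simp at hl
      · have hf : f.length = m := by simpa using hl
        cases e
        · exact (hpair f hf).1
        · exact (hpair f hf).2
    classical
    have HclaimB : ∀ (s : ℕ) (c : List Bool → D),
        (∀ l : List Bool, m+1 < l.length → c l = 0) →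
        (∃ q ∈ PolySet i x, q + FF b i x (m+1) c = 0) →
        ((LB (m+1)).filter (fun l => l.length = m+1 ∧ c l ≠ 0)).card ≤ s →
        ∀ l : List Bool, l.length = m+1 → c l = 0 := by
      intro s
      induction s with
      | zero =>
        intro c hsupp hex hcard l hl
        by_contra hcl
        have hmem : l ∈ (LB (m+1)).filter (fun l => l.length = m+1 ∧ c l ≠ 0) :=
          Finset.mem_filter.mpr ⟨mem_LB.mpr (le_of_eq hl), hl, hcl⟩
        have := Finset.card_pos.mpr ⟨l, hmem⟩
        omega
      | succ s ihs =>
        intro c hsupp hex hcard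
        by_cases hcs : ((LB (m+1)).filter (fun l => l.length = m+1 ∧ c l ≠ 0)).card ≤ s
        · exact ihs c hsupp hex hcs
        · have hpos : 0 < ((LB (m+1)).filter (fun l => l.length = m+1 ∧ c l ≠ 0)).card := by
            omega
          obtain ⟨l₀, hl₀⟩ := Finset.card_pos.mp hpos
          obtain ⟨hl₀m, hlen0, hc0⟩ :
              l₀ ∈ LB (m+1) ∧ l₀.length = m+1 ∧ c l₀ ≠ 0 := by
            have := Finset.mem_filter.mp hl₀
            exact ⟨this.1, this.2.1, this.2.2⟩
          set c' : List Bool → D := fun l => (c l₀)⁻¹ * c l with hc'def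
          have hsupp' : ∀ l : List Bool, m+1 < l.length → c' l = 0 := by
            intro l hl
            rw [hc'def]
            simp only
            rw [hsupp l hl, mul_zero]
          have hex' : ∃ q ∈ PolySet i x, q + FF b i x (m+1) c' = 0 := by
            obtain ⟨q, hqP, hq⟩ := hex
            refine ⟨i ((c l₀)⁻¹) * q, poly_imul i x _ hqP, ?_⟩
            rw [hc'def, ← FF_scale, ← mul_add, hq, mul_zero]
          obtain ⟨hsuppT, hexT⟩ := HRelT c' hsupp' hex'
          have hTtop : ∀ l : List Bool, l.length = m+1 →
              TT σ δ b c' l = -psi σ δ (c' l) := by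
            intro l hl
            rw [TT, hsupp' (false::l) (by simp [hl]), hsupp' (true::l) (by simp [hl])]
            simp
          have hsubset : (LB (m+1)).filter (fun l => l.length = m+1 ∧ TT σ δ b c' l ≠ 0)
              ⊆ ((LB (m+1)).filter (fun l => l.length = m+1 ∧ c l ≠ 0)).erase l₀ := by
            intro l hl
            obtain ⟨hmem, hlen, hneT⟩ :
                l ∈ LB (m+1) ∧ l.length = m+1 ∧ TT σ δ b c' l ≠ 0 := by
              have := Finset.mem_filter.mp hl
              exact ⟨this.1, this.2.1, this.2.2⟩
            refine Finset.mem_erase.mpr ⟨?_, Finset.mem_filter.mpr ⟨hmem, hlen, ?_⟩⟩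
            · rintro rfl
              apply hneT
              rw [hTtop l hlen, hc'def]
              simp only
              rw [inv_mul_cancel₀ hc0, psi_one σ δ hδ, neg_zero]
            · intro hcl
              apply hneT
              rw [hTtop l hlen, hc'def]
              simp only
              rw [hcl, mul_zero, psi_zero, neg_zero]
          have hcardT :
              ((LB (m+1)).filter (fun l => l.length = m+1 ∧ TT σ δ b c' l ≠ 0)).card ≤ s := by
            refine le_trans (Finset.card_le_card hsubset) ?_
            rw [Finset.card_erase_of_mem hl₀]
            omega
          have hTtop0 : ∀ l : List Bool, l.length = m+1 → TT σ δ b c' l = 0 :=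
            ihs _ hsuppT hexT hcardT
          have hψtop : ∀ l : List Bool, l.length = m+1 → psi σ δ (c' l) = 0 := by
            intro l hl
            have h5 := hTtop0 l hl
            rw [hTtop l hl] at h5
            exact neg_eq_zero.mp h5
          have hfin := HclaimA c' hsupp' hex' hψtop l₀ hlen0
          rw [hc'def] at hfin
          simp only at hfin
          rw [inv_mul_cancel₀ hc0] at hfin
          exact absurd hfin one_ne_zero
    intro c hsupp hex
    exact Hcollapse c hsupp hex (HclaimB _ c hsupp hex le_rfl)

end mainind

section final

variable (σ : D ≃ₐ[k] D) (δ : D →ₗ[k] D) (b : D) (i : D →ₐ[k] Q) (x : Q)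

/-- encoding of `Fin 2` words as `Bool` words: `0 ↦ true` (the `b·y` letter). -/
def genc (l : FreeMonoid (Fin 2)) : List Bool :=
  (FreeMonoid.toList l).map (fun j => if j = (0 : Fin 2) then true else false)

def gdec (e : List Bool) : FreeMonoid (Fin 2) :=
  FreeMonoid.ofList (e.map (fun t => if t then (0 : Fin 2) else 1))

theorem genc_gdec (e : List Bool) : genc (gdec e) = e := by
  rw [genc, gdec]
  have : FreeMonoid.toList (FreeMonoid.ofList
      (e.map (fun t => if t then (0 : Fin 2) else 1))) =
      e.map (fun t => if t then (0 : Fin 2) else 1) := rfl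
  rw [this, List.map_map]
  have h1 : ((fun j : Fin 2 => if j = (0 : Fin 2) then true else false)
      ∘ (fun t : Bool => if t then (0 : Fin 2) else 1)) = id := by
    funext t
    cases t <;> simp
  rw [h1, List.map_id]

theorem gdec_genc (l : FreeMonoid (Fin 2)) : gdec (genc l) = l := by
  rw [genc, gdec, List.map_map]
  have h1 : ((fun t : Bool => if t then (0 : Fin 2) else 1)
      ∘ (fun j : Fin 2 => if j = (0 : Fin 2) then true else false)) = id := by
    funext j
    fin_cases j <;> simp
  rw [h1, List.map_id]
  rfl

theorem genc_len (l : FreeMonoid (Fin 2)) : (genc l).length = (FreeMonoid.toList l).length := by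
  rw [genc, List.length_map]

theorem genc_cons (j : Fin 2) (l : FreeMonoid (Fin 2)) :
    genc (FreeMonoid.of j * l) = (if j = (0:Fin 2) then true else false) :: genc l := rfl

theorem lift_word (hne : (1:Q) - x ≠ 0) :
    ∀ ll : List (Fin 2),
      (FreeAlgebra.lift k ![i b * (1 - x)⁻¹, (1 - x)⁻¹])
          ((FreeAlgebra.basisFreeMonoid k (Fin 2)) (FreeMonoid.ofList ll))
        = wrd b i x (genc (FreeMonoid.ofList ll)) := by
  have hB : ∀ l : FreeMonoid (Fin 2), (FreeAlgebra.basisFreeMonoid k (Fin 2)) l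
      = (FreeAlgebra.equivMonoidAlgebraFreeMonoid (R := k) (X := Fin 2)).symm
          (MonoidAlgebra.of k (FreeMonoid (Fin 2)) l) := by
    intro l
    rw [FreeAlgebra.basisFreeMonoid, Module.Basis.map_apply, Finsupp.coe_basisSingleOne]
    rfl
  have hι : ∀ j : Fin 2,
      (FreeAlgebra.equivMonoidAlgebraFreeMonoid (R := k) (X := Fin 2)).symm
        (MonoidAlgebra.of k (FreeMonoid (Fin 2)) (FreeMonoid.of j)) = FreeAlgebra.ι k j := by
    intro j
    rw [AlgEquiv.symm_apply_eq]
    show MonoidAlgebra.of k (FreeMonoid (Fin 2)) (FreeMonoid.of j)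
      = (FreeAlgebra.lift k fun x => (MonoidAlgebra.of k (FreeMonoid (Fin 2)))
          (FreeMonoid.of x)) (FreeAlgebra.ι k j)
    rw [FreeAlgebra.lift_ι_apply]
  intro ll
  induction ll with
  | nil =>
    rw [FreeMonoid.ofList_nil, hB, map_one, map_one, map_one]
    rfl
  | cons j ll ih =>
    rw [FreeMonoid.ofList_cons, hB, map_mul, map_mul, hι, map_mul, ← hB, ih,
      FreeAlgebra.lift_ι_apply, genc_cons]
    fin_cases j
    · show (i b * (1-x)⁻¹) * wrd b i x (genc (FreeMonoid.ofList ll))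
        = wrd b i x (true :: genc (FreeMonoid.ofList ll))
      rw [wrd]
      simp [mul_assoc]
    · show (1-x)⁻¹ * wrd b i x (genc (FreeMonoid.ofList ll))
        = wrd b i x (false :: genc (FreeMonoid.ofList ll))
      rw [wrd]
      simp

end final

end BRMain



/-- Theorem 2.2 of the paper.  Let `D` be a division algebra over a field
`k`, `σ` a `k`-algebra automorphism of `D`, `δ` a `σ`-derivation of `D` over `k`; let
`ψ = (σ - 1) + δ` and `E = {u ∈ D : ψ(u) = 0}`.  Let `b ∈ D`.  If (1) `b ∉ σ(E)` and (2) for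
all `u ∈ D`, `ψ(u) ∈ σ(E) + σ(E)·b` implies `u ∈ E`, then in the quotient division ring
`Q = D(x; σ, δ)` the `k`-subalgebra generated by `b(1-x)⁻¹` and `(1-x)⁻¹` is free on those
two generators. -/
theorem free_on_two_generators_of_psi_criterion
    (k : Type*) [Field k] (D : Type*) [DivisionRing D] [Algebra k D]
    (σ : D ≃ₐ[k] D) (δ : D →ₗ[k] D)
    (hδ : ∀ a b : D, δ (a * b) = σ a * δ b + δ a * b)
    (b : D)
    (hb1 : b ∉ ⇑σ '' {u : D | σ u - u + δ u = 0})
    (hb2 : ∀ u : D,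
      (∃ α ∈ ⇑σ '' {u : D | σ u - u + δ u = 0}, ∃ β ∈ ⇑σ '' {u : D | σ u - u + δ u = 0},
        σ u - u + δ u = α + β * b) → σ u - u + δ u = 0)
    (Q : Type*) [DivisionRing Q] [Algebra k Q] (i : D →ₐ[k] Q) (x : Q)
    (hQ : IsOreQuotient k D σ.toAlgHom δ Q i x) :
    Function.Injective ⇑(FreeAlgebra.lift k ![i b * (1 - x)⁻¹, (1 - x)⁻¹]) := by
  classical
  have rel : ∀ a : D, x * i a = i (σ a) * x + i (δ a) := fun a => hQ.rel a
  have indep := hQ.indep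
  have hne : (1:Q) - x ≠ 0 := BRMain.one_sub_ne i x indep
  set L := FreeAlgebra.lift k ![i b * (1 - x)⁻¹, (1 - x)⁻¹] with hL
  have hker : ∀ r : FreeAlgebra k (Fin 2), L r = 0 → r = 0 := by
    intro r hr
    set B := FreeAlgebra.basisFreeMonoid k (Fin 2) with hBdef
    set lam := B.repr r with hlam
    have hLB : ∀ l : FreeMonoid (Fin 2), L (B l) = BRMain.wrd b i x (BRMain.genc l) := by
      intro l
      have h := BRMain.lift_word b i x hne (FreeMonoid.toList l)
      rwa [FreeMonoid.ofList_toList] at h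
    set κ : List Bool → k := fun e => lam (BRMain.gdec e) with hκ
    set m := lam.support.sup (fun l => (BRMain.genc l).length) with hm
    set c : List Bool → D := fun f =>
      algebraMap k D (κ (false::f)) + algebraMap k D (κ (true::f)) * b with hc
    have hκ0 : ∀ e : List Bool, m < e.length → κ e = 0 := by
      intro e he
      by_contra h0
      have hmem : BRMain.gdec e ∈ lam.support := Finsupp.mem_support_iff.mpr (by
        simp only [hκ] at h0; exact h0)
      have hle := Finset.le_sup (f := fun l => (BRMain.genc l).length) hmem
      simp only [BRMain.genc_gdec, ← hm] at hle
      omega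
    have hsupp : ∀ l : List Bool, m < l.length → c l = 0 := by
      intro l hl
      simp only [hc]
      rw [hκ0 (false::l) (by simp; omega), hκ0 (true::l) (by simp; omega)]
      simp
    have hS2 : ∑ e ∈ BRMain.LB (m+1), κ e • BRMain.wrd b i x e
        = algebraMap k Q (κ []) + BRMain.FF b i x m c := by
      rw [BRMain.sum_LB_succ]
      congr 1
      · rw [show BRMain.wrd b i x [] = 1 from rfl, Algebra.algebraMap_eq_smul_one]
      rw [BRMain.FF, ← Finset.sum_add_distrib]
      refine Finset.sum_congr rfl fun f _ => ?_
      simp only [hc]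
      rw [map_add, add_mul, map_mul, AlgHom.commutes, AlgHom.commutes]
      rw [show BRMain.wrd b i x (false::f) = (1-x)⁻¹ * BRMain.wrd b i x f by
            rw [BRMain.wrd]; simp,
          show BRMain.wrd b i x (true::f) = i b * ((1-x)⁻¹ * BRMain.wrd b i x f) by
            rw [BRMain.wrd]; simp]
      rw [Algebra.smul_def, Algebra.smul_def, mul_assoc]
    have hS1 : ∑ e ∈ BRMain.LB (m+1), κ e • BRMain.wrd b i x e
        = ∑ l ∈ lam.support, lam l • BRMain.wrd b i x (BRMain.genc l) := by
      have himg : lam.support.image BRMain.genc ⊆ BRMain.LB (m+1) := by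
        intro e he
        obtain ⟨l, hl, rfl⟩ := Finset.mem_image.mp he
        exact BRMain.mem_LB.mpr
          (le_trans (Finset.le_sup (f := fun l => (BRMain.genc l).length) hl) (Nat.le_succ m))
      have hzero : ∀ e ∈ BRMain.LB (m+1), e ∉ lam.support.image BRMain.genc →
          κ e • BRMain.wrd b i x e = 0 := by
        intro e _ hne2
        have hκe : κ e = 0 := by
          simp only [hκ]
          by_contra h0
          exact hne2 (Finset.mem_image.mpr
            ⟨BRMain.gdec e, Finsupp.mem_support_iff.mpr h0, BRMain.genc_gdec e⟩)
        rw [hκe, zero_smul]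
      rw [← Finset.sum_subset himg hzero]
      have hinj : ∀ a ∈ lam.support, ∀ a' ∈ lam.support,
          BRMain.genc a = BRMain.genc a' → a = a' := by
        intro a _ a' _ h
        rw [← BRMain.gdec_genc a, h, BRMain.gdec_genc]
      rw [Finset.sum_image hinj]
      refine Finset.sum_congr rfl fun l _ => ?_
      simp only [hκ]
      rw [BRMain.gdec_genc]
    have hS3 : ∑ l ∈ lam.support, lam l • BRMain.wrd b i x (BRMain.genc l) = 0 := by
      calc ∑ l ∈ lam.support, lam l • BRMain.wrd b i x (BRMain.genc l)
          = ∑ l ∈ lam.support, lam l • L (B l) :=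
            Finset.sum_congr rfl fun l _ => by rw [hLB]
        _ = L (∑ l ∈ lam.support, lam l • B l) := by
            rw [map_sum]
            exact Finset.sum_congr rfl fun l _ => (map_smul L _ _).symm
        _ = L r := by
            congr 1
            conv_rhs => rw [← B.linearCombination_repr r]
            rw [Finsupp.linearCombination_apply, Finsupp.sum, ← hlam]
        _ = 0 := hr
    have hrel : algebraMap k Q (κ []) + BRMain.FF b i x m c = 0 := by
      rw [← hS2, hS1, hS3]
    have hpoly : algebraMap k Q (κ []) ∈ BRMain.PolySet i x := by
      rw [← AlgHom.commutes i (κ [])]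
      exact BRMain.poly_const i x _
    have hmain := BRMain.main_ind σ δ b i x hδ hb1 hb2 rel indep m c hsupp ⟨_, hpoly, hrel⟩
    have halgD : Function.Injective (algebraMap k D) := (algebraMap k D).injective
    have hκcons : ∀ (f : List Bool), κ (false::f) = 0 ∧ κ (true::f) = 0 := by
      intro f
      have hcf := hmain f
      simp only [hc] at hcf
      have hκ₁ : κ (true::f) = 0 := by
        by_contra hκ1
        have halg1 : algebraMap k D (κ (true::f)) ≠ 0 := fun h =>
          hκ1 (halgD (by rw [h, map_zero]))
        have h3 : algebraMap k D (κ (true::f)) * b = -algebraMap k D (κ (false::f)) :=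
          eq_neg_of_add_eq_zero_right hcf
        have hbval : b = algebraMap k D (-((κ (true::f))⁻¹ * κ (false::f))) := by
          calc b = (algebraMap k D (κ (true::f)))⁻¹
                * (algebraMap k D (κ (true::f)) * b) := by
                rw [← mul_assoc, inv_mul_cancel₀ halg1, one_mul]
            _ = (algebraMap k D (κ (true::f)))⁻¹ * (-algebraMap k D (κ (false::f))) := by
                rw [h3]
            _ = algebraMap k D (-((κ (true::f))⁻¹ * κ (false::f))) := by
                rw [map_neg, map_mul, map_inv₀, mul_neg]
        refine hb1 ⟨algebraMap k D (-((κ (true::f))⁻¹ * κ (false::f))), ?_, ?_⟩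
        · exact BRMain.psi_algebraMap σ δ hδ _
        · rw [σ.commutes]; exact hbval.symm
      have hκ₀ : κ (false::f) = 0 := by
        rw [hκ₁, map_zero, zero_mul, add_zero] at hcf
        exact halgD (by rw [hcf, map_zero])
      exact ⟨hκ₀, hκ₁⟩
    have hκnil : κ [] = 0 := by
      have hFF0 : BRMain.FF b i x m c = 0 :=
        Finset.sum_eq_zero fun l _ => by rw [hmain l, map_zero, zero_mul]
      rw [hFF0, add_zero] at hrel
      exact (algebraMap k Q).injective (by rw [hrel, map_zero])
    have hκall : ∀ e : List Bool, κ e = 0 := by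
      intro e
      cases e with
      | nil => exact hκnil
      | cons t f =>
        cases t
        · exact (hκcons f).1
        · exact (hκcons f).2
    have hlam0 : lam = 0 := by
      ext l
      have h := hκall (BRMain.genc l)
      simp only [hκ] at h
      rw [BRMain.gdec_genc] at h
      simpa using h
    have hrepr0 : B.repr r = 0 := by rw [← hlam]; exact hlam0
    exact (LinearEquiv.map_eq_zero_iff B.repr).mp hrepr0
  intro p p' hpp
  have h0 : L (p - p') = 0 := by rw [map_sub, hpp, sub_self]
  exact sub_eq_zero.mp (hker _ h0)
end

section
/- Let K be a field with automorphism σ whose fixed field is k, and suppose there is an element a ∈ K on an infinite σ-orbit such that K = k(σ^n(a) : n ∈ ℤ). If K is not finitely generated as a field extension of k, then the quotient division ring K(x;σ) contains a free k-subalgebra on two generators. -/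
open scoped BigOperators

open IntermediateField

section FreeSubalgebraAux

variable {k K : Type*} [Field k] [Field K] [Algebra k K]

lemma FreeSub.mem_adjoin_image (e : K ≃ₐ[k] K) {S : Set K} {b : K}
    (hb : b ∈ adjoin k S) : e b ∈ adjoin k (⇑e '' S) := by
  have h : (adjoin k S).map e.toAlgHom = adjoin k (⇑e.toAlgHom '' S) :=
    IntermediateField.adjoin_map _ _ _
  have h2 : e b ∈ (adjoin k S).map e.toAlgHom := ⟨b, hb, rfl⟩
  rw [h] at h2
  simpa using h2

/-- The coefficient in `K` attached to a word in the two generators `X` and `i a * X`. -/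
def FreeSub.CwFun (τ : K ≃ₐ[k] K) (a : K) : List (Fin 2) → K
  | [] => 1
  | b :: t => (if b = 1 then a else 1) * τ (FreeSub.CwFun τ a t)

namespace FreeSub

lemma image_shift (τ : K ≃ₐ[k] K) (a : K) (n : ℕ) :
    ⇑τ '' ((fun j : ℕ => (τ ^ j) a) '' Set.Iio n)
      = (fun j : ℕ => (τ ^ (j + 1)) a) '' Set.Iio n := by
  rw [Set.image_image]
  apply Set.image_congr
  intro j _
  simp [pow_succ', AlgEquiv.mul_apply]

lemma CwFun_mem (τ : K ≃ₐ[k] K) (a : K) (l : List (Fin 2)) :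
    CwFun τ a l ∈ adjoin k ((fun j : ℕ => (τ ^ j) a) '' Set.Iio l.length) := by
  induction l with
  | nil => exact one_mem _
  | cons b t ih =>
      have h1 : ⇑τ '' ((fun j : ℕ => (τ ^ j) a) '' Set.Iio t.length)
          ⊆ (fun j : ℕ => (τ ^ j) a) '' Set.Iio (b :: t).length := by
        rw [Set.image_image]
        rintro _ ⟨j, hj, rfl⟩
        exact ⟨j + 1, by simpa using Nat.succ_lt_succ hj, by
          simp [pow_succ', AlgEquiv.mul_apply]⟩
      have h2 : τ (CwFun τ a t) ∈ adjoin k ((fun j : ℕ => (τ ^ j) a) '' Set.Iio (b :: t).length) :=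
        (IntermediateField.adjoin.mono _ _ _ h1) (mem_adjoin_image τ ih)
      have h3 : (if b = 1 then a else 1) ∈
          adjoin k ((fun j : ℕ => (τ ^ j) a) '' Set.Iio (b :: t).length) := by
        split
        · exact subset_adjoin _ _ ⟨0, by simp, by simp⟩
        · exact one_mem _
      exact mul_mem h3 h2

/-- Linear independence over `k` of the multilinear monomials in the `τ`-orbit of `a`. -/
lemma cw_indep (τ : K ≃ₐ[k] K) (a : K)
    (hnew : ∀ n : ℕ, a ∉ adjoin k ((fun j : ℕ => (τ ^ (j + 1)) a) '' Set.Iio n)) :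
    ∀ (n : ℕ) (lam : (Fin n → Fin 2) → k),
      (∑ v : Fin n → Fin 2, algebraMap k K (lam v) * CwFun τ a (List.ofFn v) = 0) →
      ∀ v, lam v = 0 := by
  intro n
  induction n with
  | zero =>
      intro lam h v
      have hv : v = (fun i => i.elim0) := by
        funext i; exact i.elim0
      have : ∑ w : Fin 0 → Fin 2, algebraMap k K (lam w) * CwFun τ a (List.ofFn w)
          = algebraMap k K (lam v) := by
        rw [Finset.sum_eq_single_of_mem v (Finset.mem_univ v)]
        · simp [List.ofFn_zero, CwFun]
        · intro w _ hw
          exact absurd (funext fun i => i.elim0 : w = v) hw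
      rw [this] at h
      exact (algebraMap k K).injective (by simpa using h)
  | succ n ih =>
      intro lam h v
      have hsplit : ∀ b : Fin 2, ∀ u : Fin n → Fin 2,
          CwFun τ a (List.ofFn (Fin.cons b u)) =
            (if b = 1 then a else 1) * τ (CwFun τ a (List.ofFn u)) := by
        intro b u
        rw [List.ofFn_succ]
        simp [CwFun, Fin.cons]
        by_cases hb : b = 1 <;> simp [hb]
      have hlen : ∀ u : Fin n → Fin 2, (List.ofFn u).length = n := fun u => List.length_ofFn
      have hmem : ∀ u : Fin n → Fin 2, τ (CwFun τ a (List.ofFn u)) ∈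
          adjoin k ((fun j : ℕ => (τ ^ (j + 1)) a) '' Set.Iio n) := by
        intro u
        have h0 := CwFun_mem (k := k) τ a (List.ofFn u)
        rw [hlen u] at h0
        have h1 := mem_adjoin_image τ h0
        rwa [image_shift] at h1
      set P0 : K := ∑ u : Fin n → Fin 2,
        algebraMap k K (lam (Fin.cons 0 u)) * CwFun τ a (List.ofFn u) with hP0
      set P1 : K := ∑ u : Fin n → Fin 2,
        algebraMap k K (lam (Fin.cons 1 u)) * CwFun τ a (List.ofFn u) with hP1
      have hτP : ∀ (b : Fin 2), τ (∑ u : Fin n → Fin 2,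
          algebraMap k K (lam (Fin.cons b u)) * CwFun τ a (List.ofFn u))
          = ∑ u : Fin n → Fin 2,
            algebraMap k K (lam (Fin.cons b u)) * τ (CwFun τ a (List.ofFn u)) := by
        intro b
        rw [map_sum]
        refine Finset.sum_congr rfl fun u _ => ?_
        rw [map_mul, AlgEquiv.commutes]
      have key : τ P0 + a * τ P1 = 0 := by
        have e1 : ∑ v : Fin (n + 1) → Fin 2, algebraMap k K (lam v) * CwFun τ a (List.ofFn v)
            = ∑ p : Fin 2 × (Fin n → Fin 2),
                algebraMap k K (lam (Fin.cons p.1 p.2))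
                  * CwFun τ a (List.ofFn (Fin.cons p.1 p.2)) := by
          rw [← Equiv.sum_comp (Fin.consEquiv fun _ : Fin (n + 1) => Fin 2)
            (fun v => algebraMap k K (lam v) * CwFun τ a (List.ofFn v))]
          rfl
        rw [e1, Fintype.sum_prod_type, Fin.sum_univ_two] at h
        rw [hP0, hP1, hτP, hτP]
        rw [← h]
        congr 1
        · refine Finset.sum_congr rfl fun u _ => ?_
          rw [hsplit]
          norm_num
        · rw [Finset.mul_sum]
          refine Finset.sum_congr rfl fun u _ => ?_
          rw [hsplit]
          norm_num
          ring
      have hF0 : τ P0 ∈ adjoin k ((fun j : ℕ => (τ ^ (j + 1)) a) '' Set.Iio n) := by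
        rw [hP0, hτP]
        exact Subalgebra.sum_mem _ fun u _ =>
          mul_mem (IntermediateField.algebraMap_mem _ _) (hmem u)
      have hF1 : τ P1 ∈ adjoin k ((fun j : ℕ => (τ ^ (j + 1)) a) '' Set.Iio n) := by
        rw [hP1, hτP]
        exact Subalgebra.sum_mem _ fun u _ =>
          mul_mem (IntermediateField.algebraMap_mem _ _) (hmem u)
      have hP1z : τ P1 = 0 := by
        by_contra hne
        apply hnew n
        have ha : a = -(τ P0) * (τ P1)⁻¹ := by
          field_simp
          linear_combination key
        have hm : -(τ P0) * (τ P1)⁻¹ ∈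
            adjoin k ((fun j : ℕ => (τ ^ (j + 1)) a) '' Set.Iio n) :=
          mul_mem (neg_mem hF0) (inv_mem hF1)
        rwa [← ha] at hm
      have hP0z : τ P0 = 0 := by
        rw [hP1z, mul_zero, add_zero] at key
        exact key
      have hz0 : P0 = 0 := τ.injective (by rw [hP0z, map_zero])
      have hz1 : P1 = 0 := τ.injective (by rw [hP1z, map_zero])
      have ih0 := ih (fun u => lam (Fin.cons 0 u)) hz0
      have ih1 := ih (fun u => lam (Fin.cons 1 u)) hz1
      have hv : v = Fin.cons (v 0) (Fin.tail v) := (Fin.cons_self_tail v).symm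
      have h01 : v 0 = 0 ∨ v 0 = 1 := by
        rcases v 0 with ⟨iv, hiv⟩
        interval_cases iv
        · exact Or.inl rfl
        · exact Or.inr rfl
      rcases h01 with h01 | h01
      · rw [hv, h01]; exact ih0 (Fin.tail v)
      · rw [hv, h01]; exact ih1 (Fin.tail v)

lemma half_orbit (ρ : K ≃ₐ[k] K) (a : K) (n₀ : ℕ)
    (ha : a ∈ adjoin k ((fun j : ℕ => (ρ ^ (j + 1)) a) '' Set.Iio n₀)) :
    ∀ t : ℕ, ((ρ⁻¹) ^ t) a ∈ adjoin k ((fun j : ℕ => (ρ ^ (j + 1)) a) '' Set.Iio n₀) := by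
  set G := adjoin k ((fun j : ℕ => (ρ ^ (j + 1)) a) '' Set.Iio n₀) with hG
  have c1 : ∀ b ∈ G, ρ⁻¹ b ∈ G := by
    intro b hb
    have h1 := mem_adjoin_image (ρ⁻¹) hb
    have h2 : ⇑ρ⁻¹ '' ((fun j : ℕ => (ρ ^ (j + 1)) a) '' Set.Iio n₀) ⊆ (G : Set K) := by
      rw [Set.image_image]
      rintro _ ⟨j, hj, rfl⟩
      show ρ⁻¹ ((ρ ^ (j + 1)) a) ∈ (G : Set K)
      have h3 : ρ⁻¹ ((ρ ^ (j + 1)) a) = (ρ ^ j) a := by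
        have h4 : ρ ^ (j + 1) = ρ * ρ ^ j := pow_succ' ρ j
        rw [h4, AlgEquiv.mul_apply]
        exact ρ.symm_apply_apply _
      rw [h3]
      rcases Nat.eq_zero_or_pos j with rfl | hj0
      · simpa using ha
      · obtain ⟨j', rfl⟩ := Nat.exists_eq_succ_of_ne_zero (Nat.pos_iff_ne_zero.mp hj0)
        exact subset_adjoin _ _ ⟨j', Set.mem_Iio.2 (Nat.lt_of_succ_lt hj), rfl⟩
    exact (IntermediateField.adjoin_le_iff.2 h2) h1
  intro t
  induction t with
  | zero => simpa using ha
  | succ t ih =>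
      have h5 : (ρ⁻¹) ^ (t + 1) = ρ⁻¹ * (ρ⁻¹) ^ t := pow_succ' _ t
      rw [h5, AlgEquiv.mul_apply]
      exact c1 _ ih

lemma dichotomy (σ : K ≃ₐ[k] K) (a : K)
    (hgen : adjoin k (Set.range fun n : ℤ => (σ ^ n) a) = ⊤)
    (hnfg : ¬ (⊤ : IntermediateField k K).FG) :
    (∀ n : ℕ, a ∉ adjoin k ((fun j : ℕ => (σ ^ (j + 1)) a) '' Set.Iio n)) ∨
    (∀ n : ℕ, a ∉ adjoin k ((fun j : ℕ => (σ⁻¹ ^ (j + 1)) a) '' Set.Iio n)) := by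
  by_contra hcon
  push_neg at hcon
  obtain ⟨⟨n₀, h₀⟩, ⟨n₁, h₁⟩⟩ := hcon
  apply hnfg
  set S0 := (fun j : ℕ => (σ ^ (j + 1)) a) '' Set.Iio n₀ with hS0
  set S1 := (fun j : ℕ => (σ⁻¹ ^ (j + 1)) a) '' Set.Iio n₁ with hS1
  have hfin : (S0 ∪ S1).Finite :=
    ((Set.finite_Iio n₀).image _).union ((Set.finite_Iio n₁).image _)
  have hsub0 : adjoin k S0 ≤ adjoin k (S0 ∪ S1) :=
    IntermediateField.adjoin.mono _ _ _ Set.subset_union_left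
  have hsub1 : adjoin k S1 ≤ adjoin k (S0 ∪ S1) :=
    IntermediateField.adjoin.mono _ _ _ Set.subset_union_right
  have horb : ∀ m : ℤ, (σ ^ m) a ∈ adjoin k (S0 ∪ S1) := by
    intro m
    rcases le_or_gt 0 m with hm | hm
    · have h2 := half_orbit σ⁻¹ a n₁ h₁ m.toNat
      rw [inv_inv] at h2
      have h3 : σ ^ m = σ ^ m.toNat := by
        rw [← zpow_natCast, Int.toNat_of_nonneg hm]
      rw [h3]
      exact hsub1 h2
    · have h2 := half_orbit σ a n₀ h₀ (-m).toNat
      have h3 : σ ^ m = σ⁻¹ ^ (-m).toNat := by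
        have h4 : ((-m).toNat : ℤ) = -m := Int.toNat_of_nonneg (by omega)
        rw [inv_pow, ← zpow_natCast σ ((-m).toNat), ← zpow_neg, h4, neg_neg]
      rw [h3]
      exact hsub0 h2
  have htop : adjoin k (S0 ∪ S1) = ⊤ := by
    refine le_antisymm le_top ?_
    rw [← hgen]
    refine IntermediateField.adjoin_le_iff.2 ?_
    rintro _ ⟨m, rfl⟩
    exact horb m
  exact IntermediateField.fg_def.mpr ⟨S0 ∪ S1, hfin, htop⟩

lemma exists_ofFn_eq {α : Type*} {j : ℕ} (l : List α) (h : l.length = j) :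
    ∃ v : Fin j → α, List.ofFn v = l := by
  subst h
  exact ⟨l.get, List.ofFn_get l⟩

end FreeSub

variable {Q : Type*} [DivisionRing Q] [Algebra k Q]

lemma FreeSub.wordProd (τ : K ≃ₐ[k] K) (a : K) (i : K →ₐ[k] Q) (X : Q)
    (hcomm : ∀ b : K, X * i b = i (τ b) * X) :
    ∀ l : List (Fin 2),
      ((l.map (fun b : Fin 2 => if b = 1 then i a * X else X)).prod)
        = i (CwFun τ a l) * X ^ l.length := by
  intro l
  induction l with
  | nil => simp [CwFun]
  | cons b t ih =>
      rw [List.map_cons, List.prod_cons, ih]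
      have h1 : X * i (CwFun τ a t) = i (τ (CwFun τ a t)) * X := hcomm _
      by_cases hb : b = 1
      · simp only [hb, if_pos, CwFun, List.length_cons]
        rw [pow_succ', map_mul]
        rw [mul_assoc (i a) X (i (CwFun τ a t) * X ^ t.length),
          ← mul_assoc X (i (CwFun τ a t)) (X ^ t.length), h1]
        simp only [mul_assoc]
      · simp only [hb, if_neg, if_false, CwFun, List.length_cons, if_neg hb]
        rw [pow_succ', map_mul]
        rw [← mul_assoc, h1]
        simp only [map_one, one_mul, mul_assoc]

/-- The heart of the construction: if `a` is "always new" along the `τ`-orbit, then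
`X` and `i a * X` generate a free subalgebra. -/
lemma FreeSub.free_of_new (τ : K ≃ₐ[k] K) (a : K) (i : K →ₐ[k] Q) (X : Q)
    (hcomm : ∀ b : K, X * i b = i (τ b) * X)
    (hindep : ∀ (n : ℕ) (c : ℕ → K),
      ∑ j ∈ Finset.range n, i (c j) * X ^ j = 0 → ∀ j < n, c j = 0)
    (hnew : ∀ n : ℕ, a ∉ adjoin k ((fun j : ℕ => (τ ^ (j + 1)) a) '' Set.Iio n)) :
    ContainsFreeSubalgebra k Q := by
  classical
  have hcw := cw_indep τ a hnew
  set g : Fin 2 → Q := fun b => if b = 1 then i a * X else X with hg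
  set f : FreeAlgebra k (Fin 2) →ₐ[k] Q := FreeAlgebra.lift k g with hf
  refine ⟨f, ?_⟩
  set Φ : FreeAlgebra k (Fin 2) ≃ₐ[k] MonoidAlgebra k (FreeMonoid (Fin 2)) :=
    FreeAlgebra.equivMonoidAlgebraFreeMonoid with hΦ
  set F : MonoidAlgebra k (FreeMonoid (Fin 2)) →ₐ[k] Q := f.comp Φ.symm.toAlgHom with hF
  have hΦι : ∀ b : Fin 2,
      Φ (FreeAlgebra.ι k b) = MonoidAlgebra.of k (FreeMonoid (Fin 2)) (FreeMonoid.of b) := by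
    intro b
    simp [hΦ, FreeAlgebra.equivMonoidAlgebraFreeMonoid]
  have hFof : ∀ w : FreeMonoid (Fin 2),
      F (MonoidAlgebra.of k (FreeMonoid (Fin 2)) w)
        = i (CwFun τ a w.toList) * X ^ w.toList.length := by
    have hM : (F : MonoidAlgebra k (FreeMonoid (Fin 2)) →+* Q).toMonoidHom.comp
        (MonoidAlgebra.of k (FreeMonoid (Fin 2))) = FreeMonoid.lift g := by
      apply FreeMonoid.hom_eq
      intro b
      have h1 : Φ.symm (MonoidAlgebra.of k (FreeMonoid (Fin 2)) (FreeMonoid.of b))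
          = FreeAlgebra.ι k b := by
        rw [AlgEquiv.symm_apply_eq, hΦι]
      simp only [MonoidHom.coe_comp, RingHom.toMonoidHom_eq_coe, Function.comp_apply,
        MonoidHom.coe_coe, RingHom.coe_coe, hF, AlgHom.coe_comp, AlgEquiv.toAlgHom_eq_coe,
        AlgHom.coe_coe, Function.comp_apply, AlgEquiv.coe_algHom]
      rw [h1]
      simp [hf, hg]
    intro w
    have h2 : F (MonoidAlgebra.of k (FreeMonoid (Fin 2)) w)
        = (FreeMonoid.lift g) w := by
      have := congrArg (fun (φ : FreeMonoid (Fin 2) →* Q) => φ w) hM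
      simpa using this
    rw [h2, ← FreeMonoid.ofList_toList w, FreeMonoid.lift_ofList]
    rw [FreeMonoid.toList_ofList]
    exact wordProd τ a i X hcomm w.toList
  have hker : ∀ q : MonoidAlgebra k (FreeMonoid (Fin 2)), F q = 0 → q = 0 := by
    intro q hq
    have hq' : F q = ∑ w ∈ q.coeff.support,
        algebraMap k Q (q.coeff w) * (i (CwFun τ a w.toList) * X ^ w.toList.length) := by
      conv_lhs => rw [← MonoidAlgebra.sum_coeff_single q]
      rw [Finsupp.sum, map_sum]
      refine Finset.sum_congr rfl fun w hw => ?_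
      have h3 : MonoidAlgebra.single w (q.coeff w)
          = (q.coeff w) • (MonoidAlgebra.of k (FreeMonoid (Fin 2)) w) := by
        simp [MonoidAlgebra.of_apply, MonoidAlgebra.smul_single']
      rw [h3, map_smul, hFof, Algebra.smul_def]
    set s := q.coeff.support with hs
    set N := (s.sup fun w => w.toList.length) + 1 with hN
    set d : ℕ → K := fun j => ∑ w ∈ s.filter (fun w => w.toList.length = j),
      algebraMap k K (q.coeff w) * CwFun τ a w.toList with hd
    have hmaps : ∀ w ∈ s, w.toList.length ∈ Finset.range N := fun w hw =>
      Finset.mem_range.2 (Nat.lt_succ_of_le (Finset.le_sup hw))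
    have hsum : ∑ j ∈ Finset.range N, i (d j) * X ^ j = 0 := by
      calc ∑ j ∈ Finset.range N, i (d j) * X ^ j
          = ∑ j ∈ Finset.range N, ∑ w ∈ s.filter (fun w => w.toList.length = j),
              algebraMap k Q (q.coeff w) * (i (CwFun τ a w.toList) * X ^ w.toList.length) := by
            refine Finset.sum_congr rfl fun j hj => ?_
            rw [hd]
            simp only
            rw [map_sum, Finset.sum_mul]
            refine Finset.sum_congr rfl fun w hw => ?_
            have hwj : w.toList.length = j := by
              simpa using (Finset.mem_filter.1 hw).2
            rw [map_mul, AlgHom.commutes, hwj, mul_assoc]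
        _ = ∑ w ∈ s, algebraMap k Q (q.coeff w) * (i (CwFun τ a w.toList) * X ^ w.toList.length) :=
            Finset.sum_fiberwise_of_maps_to hmaps _
        _ = F q := hq'.symm
        _ = 0 := hq
    have hdz : ∀ j < N, d j = 0 := hindep N d hsum
    have hcoef : ∀ w ∈ s, q.coeff w = 0 := by
      intro w hw
      set j := w.toList.length with hj
      set θ : (Fin j → Fin 2) → FreeMonoid (Fin 2) :=
        fun v => FreeMonoid.ofList (List.ofFn v) with hθ
      have hθinj : Function.Injective θ := by
        intro v v' hvv
        have h5 : List.ofFn v = List.ofFn v' := hvv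
        exact List.ofFn_injective h5
      set lam : (Fin j → Fin 2) → k :=
        fun v => if θ v ∈ s.filter (fun w' => w'.toList.length = j) then q.coeff (θ v) else 0 with hlam
      have hsub : s.filter (fun w' => w'.toList.length = j) ⊆ Finset.univ.image θ := by
        intro w' hw'
        have hw'j : w'.toList.length = j := by
          simpa using (Finset.mem_filter.1 hw').2
        obtain ⟨v, hv⟩ := exists_ofFn_eq w'.toList hw'j
        refine Finset.mem_image.2 ⟨v, Finset.mem_univ _, ?_⟩
        show FreeMonoid.ofList (List.ofFn v) = w'
        rw [hv, FreeMonoid.ofList_toList]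
      have h4 : ∑ w' ∈ Finset.univ.image θ,
            (if w' ∈ s.filter (fun w'' => w''.toList.length = j) then
              algebraMap k K (q.coeff w') * CwFun τ a w'.toList else 0)
          = ∑ v : Fin j → Fin 2, algebraMap k K (lam v) * CwFun τ a (List.ofFn v) := by
        rw [Finset.sum_image (fun v _ v' _ h => hθinj h)]
        refine Finset.sum_congr rfl fun v _ => ?_
        by_cases hv : θ v ∈ s.filter (fun w'' => w''.toList.length = j)
        · rw [if_pos hv]
          have hlv : lam v = q.coeff (θ v) := by rw [hlam]; simp only [if_pos hv]
          rw [hlv]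
          rfl
        · rw [if_neg hv]
          have hlv : lam v = 0 := by rw [hlam]; simp only [if_neg hv]
          rw [hlv, map_zero, zero_mul]
      have hlamsum : ∑ v : Fin j → Fin 2,
          algebraMap k K (lam v) * CwFun τ a (List.ofFn v) = 0 := by
        rw [← h4, ← Finset.sum_filter]
        have h5 : (Finset.univ.image θ).filter
              (fun w'' => w'' ∈ s.filter (fun w3 => w3.toList.length = j))
            = s.filter (fun w3 => w3.toList.length = j) := by
          apply Finset.Subset.antisymm
          · intro w'' hw''
            exact (Finset.mem_filter.1 hw'').2
          · intro w'' hw''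
            exact Finset.mem_filter.2 ⟨hsub hw'', hw''⟩
        rw [h5]
        have hjN : j < N := Finset.mem_range.1 (hmaps w hw)
        have h6 := hdz j hjN
        rw [hd] at h6
        exact h6
      have hlamv := hcw j lam hlamsum
      obtain ⟨v, hv⟩ := exists_ofFn_eq w.toList hj.symm
      have hvw : θ v = w := by
        show FreeMonoid.ofList (List.ofFn v) = w
        rw [hv, FreeMonoid.ofList_toList]
      have hwf : θ v ∈ s.filter (fun w'' => w''.toList.length = j) := by
        rw [hvw]
        exact Finset.mem_filter.2 ⟨hw, hj.symm⟩
      have h7 := hlamv v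
      rw [hlam] at h7
      simp only [if_pos hwf] at h7
      rw [hvw] at h7
      exact h7
    ext w
    by_cases hw : w ∈ s
    · exact hcoef w hw
    · exact Finsupp.notMem_support_iff.1 hw
  intro p q hpq
  have h0 : f (p - q) = 0 := by rw [map_sub, hpq, sub_self]
  have h1 : F (Φ (p - q)) = 0 := by
    have h2 : F (Φ (p - q)) = f (Φ.symm (Φ (p - q))) := rfl
    rw [h2, AlgEquiv.symm_apply_apply]
    exact h0
  have h2 := hker _ h1
  have h3 : p - q = 0 := Φ.injective (by rw [h2, map_zero])
  exact sub_eq_zero.mp h3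

end FreeSubalgebraAux

/-- Proposition 3.2 of the paper.  Let `K` be a field with automorphism `σ`
whose fixed field is `k`, and suppose there is `a ∈ K` on an infinite `σ`-orbit with
`K = k(σⁿ(a) : n ∈ ℤ)`.  If `K` is not finitely generated as a field extension of `k`, then
the quotient division ring `Q = K(x; σ)` contains a free `k`-subalgebra on two generators. -/
theorem containsFreeSubalgebra_of_infinitely_generated
    (k : Type*) [Field k] (K : Type*) [Field K] [Algebra k K]
    (σ : K ≃ₐ[k] K)
    (hfix : ∀ b : K, σ b = b ↔ ∃ c : k, algebraMap k K c = b)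
    (a : K)
    (horbit : (Set.range fun n : ℤ => (σ ^ n) a).Infinite)
    (hgen : IntermediateField.adjoin k (Set.range fun n : ℤ => (σ ^ n) a) = ⊤)
    (hnfg : ¬ (⊤ : IntermediateField k K).FG)
    (Q : Type*) [DivisionRing Q] [Algebra k Q] (i : K →ₐ[k] Q) (x : Q)
    (hQ : IsOreQuotient k K σ.toAlgHom 0 Q i x) :
    ContainsFreeSubalgebra k Q := by
  -- basic consequences of the Ore-quotient axioms
  have hcomm : ∀ b : K, x * i b = i (σ b) * x := by
    intro b
    have h := hQ.rel b
    simpa using h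
  have hx : x ≠ 0 := by
    intro h0
    have h1 : ∑ j ∈ Finset.range 2, i ((fun j => if j = 1 then (1 : K) else 0) j) * x ^ j
        = 0 := by
      rw [Finset.sum_range_succ, Finset.sum_range_one]
      simp [h0]
    have h2 := hQ.indep 2 _ h1 1 (by norm_num)
    simp at h2
  -- the commutation rule for x⁻¹
  have hcomminv : ∀ b : K, x⁻¹ * i b = i (σ⁻¹ b) * x⁻¹ := by
    intro b
    have h1 : x * i (σ⁻¹ b) = i b * x := by
      have h2 := hcomm (σ⁻¹ b)
      have h3 : σ (σ⁻¹ b) = b := σ.apply_symm_apply b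
      rw [h3] at h2
      exact h2
    calc x⁻¹ * i b = x⁻¹ * i b * (x * x⁻¹) := by rw [mul_inv_cancel₀ hx, mul_one]
      _ = x⁻¹ * (i b * x) * x⁻¹ := by simp only [mul_assoc]
      _ = x⁻¹ * (x * i (σ⁻¹ b)) * x⁻¹ := by rw [h1]
      _ = i (σ⁻¹ b) * x⁻¹ := by
          rw [← mul_assoc, inv_mul_cancel₀ hx, one_mul]
  -- independence of powers of x⁻¹
  have hindepinv : ∀ (n : ℕ) (c : ℕ → K),
      ∑ j ∈ Finset.range n, i (c j) * (x⁻¹) ^ j = 0 → ∀ j < n, c j = 0 := by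
    intro n c hsum j hj
    have hxp : ∀ m : ℕ, (x ^ m) ≠ 0 := fun m => pow_ne_zero m hx
    have hkey : ∀ j' < n, (x⁻¹) ^ j' * x ^ (n - 1) = x ^ (n - 1 - j') := by
      intro j' hj'
      have hsplit : x ^ (n - 1) = x ^ j' * x ^ (n - 1 - j') := by
        rw [← pow_add]
        congr 1
        omega
      rw [hsplit, inv_pow, inv_mul_cancel_left₀ (hxp j')]
    have h2 : ∑ j' ∈ Finset.range n, i (c j') * x ^ (n - 1 - j') = 0 := by
      have h3 := congrArg (fun y => y * x ^ (n - 1)) hsum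
      simp only [zero_mul] at h3
      rw [Finset.sum_mul] at h3
      rw [← h3]
      refine Finset.sum_congr rfl fun j' hj' => ?_
      rw [mul_assoc, hkey j' (Finset.mem_range.1 hj')]
    have h4 : ∑ m ∈ Finset.range n, i (c (n - 1 - m)) * x ^ m = 0 := by
      rw [← h2]
      refine Finset.sum_nbij' (fun m => n - 1 - m) (fun j' => n - 1 - j') ?_ ?_ ?_ ?_ ?_
      · intro m hm
        simp only [Finset.mem_range] at hm ⊢
        omega
      · intro j' hj'
        simp only [Finset.mem_range] at hj' ⊢
        omega
      · intro m hm
        simp only [Finset.mem_range] at hm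
        beta_reduce
        omega
      · intro j' hj'
        simp only [Finset.mem_range] at hj'
        beta_reduce
        omega
      · intro m hm
        simp only [Finset.mem_range] at hm
        beta_reduce
        congr 2
        omega
    have h5 := hQ.indep n (fun m => c (n - 1 - m)) h4
    have h6 := h5 (n - 1 - j) (by omega)
    have h7 : n - 1 - (n - 1 - j) = j := by omega
    rw [h7] at h6
    exact h6
  rcases FreeSub.dichotomy σ a hgen hnfg with hnew | hnew
  · exact FreeSub.free_of_new σ a i x hcomm hQ.indep hnew
  · exact FreeSub.free_of_new σ⁻¹ a i x⁻¹ hcomminv hindepinv hnew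
end

section
/- Let K be a field with automorphism σ whose fixed field is k, let a ∈ K, and write a_j = σ^j(a) for j ∈ ℤ. If the field k(a_i : i ≥ 0) is not finitely generated as a field extension of k, then the countable family of elements {a x^j : j ≥ 1} generates a free k-subalgebra of the quotient division ring K(x;σ): all distinct words in these elements are linearly independent over k. -/
open scoped BigOperators

/-- total degree of a word -/
def wD : List ℕ → ℕ
  | [] => 0
  | j :: u => (j + 1) + wD u

/-- set of partial sums of a word -/
def wT : List ℕ → Finset ℕ
  | [] => ∅
  | j :: u => insert 0 ((wT u).image (· + (j + 1)))

lemma wT_subset_range : ∀ w : List ℕ, wT w ⊆ Finset.range (wD w) := by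
  intro w
  induction w with
  | nil => simp [wT, wD]
  | cons j u ih =>
    intro s hs
    simp only [wT, Finset.mem_insert, Finset.mem_image] at hs
    rcases hs with rfl | ⟨t, ht, rfl⟩
    · simp only [Finset.mem_range, wD]; omega
    · have := ih ht
      simp only [Finset.mem_range] at this ⊢
      simp only [wD]; omega

lemma card_wT : ∀ w : List ℕ, (wT w).card = w.length := by
  intro w
  induction w with
  | nil => simp [wT]
  | cons j u ih =>
    have h0 : (0 : ℕ) ∉ (wT u).image (· + (j + 1)) := by
      simp only [Finset.mem_image]; rintro ⟨t, _, h⟩; omega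
    have hinj : Function.Injective (· + (j + 1) : ℕ → ℕ) := add_left_injective _
    simp [wT, Finset.card_insert_of_notMem h0, Finset.card_image_of_injective _ hinj, ih]

lemma zero_mem_wT (j : ℕ) (u : List ℕ) : 0 ∈ wT (j :: u) := by simp [wT]

lemma wT_wD_inj : ∀ w w' : List ℕ, wD w = wD w' → wT w = wT w' → w = w' := by
  intro w
  induction w with
  | nil =>
    intro w' hD hT
    cases w' with
    | nil => rfl
    | cons j' u' =>
      exfalso
      have := card_wT (j' :: u')
      rw [← hT] at this
      simp [wT] at this
  | cons j u ih =>
    intro w' hD hT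
    cases w' with
    | nil =>
      exfalso
      have := card_wT (j :: u)
      rw [hT] at this
      simp [wT] at this
    | cons j' u' =>
      have h0 : (0 : ℕ) ∉ (wT u).image (· + (j + 1)) := by
        simp only [Finset.mem_image]; rintro ⟨t, _, h⟩; omega
      have h0' : (0 : ℕ) ∉ (wT u').image (· + (j' + 1)) := by
        simp only [Finset.mem_image]; rintro ⟨t, _, h⟩; omega
      have herase : (wT u).image (· + (j + 1)) = (wT u').image (· + (j' + 1)) := by
        have : (wT (j :: u)).erase 0 = (wT (j' :: u')).erase 0 := by rw [hT]
        simpa [wT, Finset.erase_insert h0, Finset.erase_insert h0'] using this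
      -- case split on emptiness of u
      cases u with
      | nil =>
        cases u' with
        | nil =>
          simp [wD] at hD
          rw [hD]
        | cons j2 u2 =>
          exfalso
          have hc := congrArg Finset.card herase
          have hinj : Function.Injective (· + (j + 1) : ℕ → ℕ) := add_left_injective _
          have hinj' : Function.Injective (· + (j' + 1) : ℕ → ℕ) := add_left_injective _
          rw [Finset.card_image_of_injective _ hinj, Finset.card_image_of_injective _ hinj',
            card_wT, card_wT] at hc
          simp at hc
      | cons j2 u2 =>
        cases u' with
        | nil =>
          exfalso
          have hc := congrArg Finset.card herase
          have hinj : Function.Injective (· + (j + 1) : ℕ → ℕ) := add_left_injective _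
          have hinj' : Function.Injective (· + (j' + 1) : ℕ → ℕ) := add_left_injective _
          rw [Finset.card_image_of_injective _ hinj, Finset.card_image_of_injective _ hinj',
            card_wT, card_wT] at hc
          simp at hc
        | cons j2' u2' =>
          set u₁ := j2 :: u2
          set u₁' := j2' :: u2'
          have hmem : j + 1 ∈ (wT u₁').image (· + (j' + 1)) := by
            rw [← herase]
            exact Finset.mem_image.2 ⟨0, zero_mem_wT _ _, by omega⟩
          have hmem' : j' + 1 ∈ (wT u₁).image (· + (j + 1)) := by
            rw [herase]
            exact Finset.mem_image.2 ⟨0, zero_mem_wT _ _, by omega⟩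
          have hjj : j = j' := by
            obtain ⟨t, _, ht⟩ := Finset.mem_image.1 hmem
            obtain ⟨t', _, ht'⟩ := Finset.mem_image.1 hmem'
            have h1 : t + (j' + 1) = j + 1 := ht
            have h2 : t' + (j + 1) = j' + 1 := ht'
            omega
          subst hjj
          have hinj : Function.Injective (· + (j + 1) : ℕ → ℕ) := add_left_injective _
          have hTu : wT u₁ = wT u₁' :=
            Finset.image_injective hinj herase
          have hDu : wD u₁ = wD u₁' := by
            have h : (j + 1) + wD u₁ = (j + 1) + wD u₁' := hD
            omega
          rw [ih u₁' hDu hTu]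

section WBOre
variable {k : Type*} [Field k] {K : Type*} [Field K] [Algebra k K]
variable {Q : Type*} [DivisionRing Q] [Algebra k Q]

/-- the coefficient of a word: `a · σ^{s_1}(a) ⋯` over partial sums -/
noncomputable def wB (σ : K ≃ₐ[k] K) (a : K) : List ℕ → K
  | [] => 1
  | j :: u => a * (σ ^ (j + 1)) (wB σ a u)

lemma wB_eq_prod (σ : K ≃ₐ[k] K) (a : K) :
    ∀ w : List ℕ, wB σ a w = ∏ s ∈ wT w, (σ ^ s) a := by
  intro w
  induction w with
  | nil => simp [wB, wT]
  | cons j u ih =>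
    have h0 : (0 : ℕ) ∉ (wT u).image (· + (j + 1)) := by
      simp only [Finset.mem_image]; rintro ⟨t, _, h⟩; omega
    have hinj : Function.Injective (· + (j + 1) : ℕ → ℕ) := add_left_injective _
    rw [wB, ih, wT, Finset.prod_insert h0, Finset.prod_image fun a _ b _ h => hinj h]
    rw [map_prod, pow_zero, AlgEquiv.one_apply]
    congr 1
    refine Finset.prod_congr rfl fun s _ => ?_
    rw [← AlgEquiv.mul_apply, ← pow_add, add_comm]

lemma xpow_comm (σ : K ≃ₐ[k] K) (i : K →ₐ[k] Q) (x : Q)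
    (hQ : IsOreQuotient k K σ.toAlgHom 0 Q i x) :
    ∀ (e : ℕ) (b : K), x ^ e * i b = i ((σ ^ e) b) * x ^ e := by
  intro e
  induction e with
  | zero => intro b; simp
  | succ e ih =>
    intro b
    have hrel : x * i b = i (σ b) * x := by
      have h := hQ.rel b
      simpa using h
    rw [pow_succ x e, mul_assoc, hrel, ← mul_assoc, ih, mul_assoc, pow_succ σ e,
      AlgEquiv.mul_apply]

lemma word_image (σ : K ≃ₐ[k] K) (a : K) (i : K →ₐ[k] Q) (x : Q)
    (hQ : IsOreQuotient k K σ.toAlgHom 0 Q i x) :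
    ∀ w : List ℕ,
      (FreeMonoid.lift fun j : ℕ => i a * x ^ (j + 1)) (FreeMonoid.ofList w)
        = i (wB σ a w) * x ^ wD w := by
  intro w
  induction w with
  | nil => simp [wB, wD]
  | cons j u ih =>
    have hcons : FreeMonoid.ofList (j :: u) = FreeMonoid.of j * FreeMonoid.ofList u := rfl
    rw [hcons, map_mul, FreeMonoid.lift_eval_of, ih]
    have h := xpow_comm σ i x hQ (j + 1) (wB σ a u)
    calc i a * x ^ (j + 1) * (i (wB σ a u) * x ^ wD u)
        = i a * ((x ^ (j + 1) * i (wB σ a u)) * x ^ wD u) := by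
          rw [mul_assoc, mul_assoc]
      _ = i a * ((i ((σ ^ (j + 1)) (wB σ a u)) * x ^ (j + 1)) * x ^ wD u) := by rw [h]
      _ = (i a * i ((σ ^ (j + 1)) (wB σ a u))) * (x ^ (j + 1) * x ^ wD u) := by
          rw [mul_assoc, mul_assoc]
      _ = i (wB σ a (j :: u)) * x ^ wD (j :: u) := by
          rw [← map_mul, ← pow_add, wB, wD]

end WBOre

section Core
variable {k : Type*} [Field k] {K : Type*} [Field K] [Algebra k K]

/-- shifted evaluation of a multilinear coefficient function -/
noncomputable def evalP (σ : K ≃ₐ[k] K) (a : K) (t M : ℕ) (c : Finset ℕ → k) : K :=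
  ∑ S ∈ (Finset.range M).powerset, c S • ∏ s ∈ S, (σ ^ (s + t)) a

lemma sigma_pow_apply (σ : K ≃ₐ[k] K) (a : K) (s t : ℕ) :
    σ ((σ ^ (s + t)) a) = (σ ^ (s + t + 1)) a := by
  rw [pow_succ' σ (s + t)]
  rfl

lemma evalP_succ (σ : K ≃ₐ[k] K) (a : K) (t M : ℕ) (c : Finset ℕ → k) :
    σ (evalP σ a t M c) = evalP σ a (t + 1) M c := by
  unfold evalP
  rw [map_sum]
  refine Finset.sum_congr rfl fun S _ => ?_
  rw [map_smul, map_prod]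
  congr 1
  refine Finset.prod_congr rfl fun s _ => ?_
  rw [sigma_pow_apply]
  rfl

lemma evalP_eq (σ : K ≃ₐ[k] K) (a : K) (t M : ℕ) (c : Finset ℕ → k) :
    evalP σ a t M c = (σ ^ t) ((evalP σ a 0 M c)) := by
  induction t with
  | zero => rfl
  | succ t ih =>
    rw [pow_succ' σ t, AlgEquiv.mul_apply, ← ih, evalP_succ]

theorem core_lemma (σ : K ≃ₐ[k] K) (a : K)
    (hnfg : ¬(IntermediateField.adjoin k (Set.range fun n : ℕ => (σ ^ n) a)).FG) :
    ∀ (M : ℕ) (c : Finset ℕ → k), (∀ S : Finset ℕ, ¬S ⊆ Finset.range M → c S = 0) →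
      evalP σ a 0 M c = 0 → ∀ S, c S = 0 := by
  intro M
  induction M with
  | zero =>
    intro c hbd hev S
    by_cases hS : S = ∅
    · subst hS
      have : evalP σ a 0 0 c = algebraMap k K (c ∅) := by
        simp [evalP]
        rw [Algebra.smul_def, mul_one]
      rw [hev] at this
      have := (map_eq_zero (algebraMap k K)).1 this.symm
      exact this
    · exact hbd S (by simp [Finset.subset_empty, hS, Finset.range_zero])
  | succ m ih =>
    classical
    intro c hbd hev
    -- split the evaluation
    set A : ℕ → K := fun n => (σ ^ n) a with hA
    have hq0 : ∀ T : Finset ℕ, ¬T ⊆ Finset.range m →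
        (if T ⊆ Finset.range m then c (insert m T) else 0) = 0 := by
      intro T hT; rw [if_neg hT]
    set q : Finset ℕ → k := fun T => if T ⊆ Finset.range m then c (insert m T) else 0 with hqdef
    set r : Finset ℕ → k := fun T => if m ∈ T then 0 else c T with hrdef
    have hr0 : ∀ T : Finset ℕ, ¬T ⊆ Finset.range m → r T = 0 := by
      intro T hT
      by_cases hm : m ∈ T
      · simp only [hrdef, if_pos hm]
      · simp only [hrdef, if_neg hm]
        apply hbd
        intro hsub
        apply hT
        intro y hy
        have := hsub hy
        rw [Finset.mem_range] at this ⊢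
        rcases Nat.lt_succ_iff_lt_or_eq.1 this with h | h
        · exact h
        · exact absurd (h ▸ hy) hm
    have hdisj : Disjoint (Finset.range m).powerset
        (Finset.image (insert m) (Finset.range m).powerset) := by
      rw [Finset.disjoint_left]
      intro S hS hS'
      rw [Finset.mem_powerset] at hS
      obtain ⟨T, _, rfl⟩ := Finset.mem_image.1 hS'
      exact absurd (hS (Finset.mem_insert_self m T)) (by simp)
    have hinsinj : ∀ T ∈ (Finset.range m).powerset, ∀ T' ∈ (Finset.range m).powerset,
        insert m T = insert m T' → T = T' := by
      intro T hT T' hT' h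
      rw [Finset.mem_powerset] at hT hT'
      have hm : m ∉ T := fun hc => by simpa using hT hc
      have hm' : m ∉ T' := fun hc => by simpa using hT' hc
      rw [← Finset.erase_insert hm, h, Finset.erase_insert hm']
    have key : ∀ t, evalP σ a t (m + 1) c
        = A (m + t) * evalP σ a t m q + evalP σ a t m r := by
      intro t
      unfold evalP
      rw [Finset.range_add_one, Finset.powerset_insert, Finset.sum_union hdisj, add_comm]
      congr 1
      · rw [Finset.sum_image hinsinj, Finset.mul_sum]
        refine Finset.sum_congr rfl fun T hT => ?_
        rw [Finset.mem_powerset] at hT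
        have hm : m ∉ T := fun hc => by simpa using hT hc
        rw [Finset.prod_insert hm]
        have hqT : q T = c (insert m T) := by simp only [hqdef, if_pos hT]
        rw [hqT, mul_smul_comm]
      · refine Finset.sum_congr rfl fun S hS => ?_
        rw [Finset.mem_powerset] at hS
        have hm : m ∉ S := fun hc => by simpa using hS hc
        have : r S = c S := by simp only [hrdef, if_neg hm]
        rw [this]
    by_cases hq : evalP σ a 0 m q = 0
    · have hq' : ∀ T, q T = 0 := ih q (fun T hT => by simp only [hqdef, if_neg hT]) hq
      have hr : evalP σ a 0 m r = 0 := by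
        have k0 := key 0
        rw [hev, hq, mul_zero, zero_add] at k0
        exact k0.symm
      have hr' : ∀ T, r T = 0 := ih r hr0 hr
      intro S
      by_cases hS : S ⊆ Finset.range (m + 1)
      · by_cases hm : m ∈ S
        · have hsub : S.erase m ⊆ Finset.range m := by
            intro y hy
            have h1 := Finset.mem_of_mem_erase hy
            have h2 := Finset.ne_of_mem_erase hy
            have := hS h1
            rw [Finset.mem_range] at this ⊢
            omega
          have := hq' (S.erase m)
          simp only [hqdef, if_pos hsub] at this
          rwa [Finset.insert_erase hm] at this
        · have := hr' S
          simpa only [hrdef, if_neg hm] using this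
      · exact hbd S hS
    · -- contradiction with non-finite-generation
      exfalso
      apply hnfg
      have hqt : ∀ t, evalP σ a t m q ≠ 0 := by
        intro t h
        apply hq
        rw [evalP_eq] at h
        exact (σ ^ t).injective (by rw [h, map_zero])
      have hct : ∀ t, evalP σ a t (m + 1) c = 0 := fun t => by
        rw [evalP_eq, hev, map_zero]
      set E := IntermediateField.adjoin k ((Finset.image A (Finset.range m) : Finset K) : Set K) with hE
      have hAE : ∀ j, A j ∈ E := by
        intro j
        induction j using Nat.strong_induction_on with
        | _ j ihj =>
          by_cases hj : j < m
          · exact IntermediateField.subset_adjoin _ _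
              (Finset.mem_coe.2 (Finset.mem_image.2 ⟨j, Finset.mem_range.2 hj, rfl⟩))
          · push_neg at hj
            set t := j - m with ht
            have hjm : j = m + t := by omega
            have hevalE : ∀ d : Finset ℕ → k, evalP σ a t m d ∈ E := by
              intro d
              apply sum_mem
              intro S hS
              rw [Finset.mem_powerset] at hS
              rw [Algebra.smul_def]
              refine mul_mem (E.algebraMap_mem _) (prod_mem fun s hs => ?_)
              have hsm : s < m := Finset.mem_range.1 (hS hs)
              exact ihj (s + t) (by omega)
            have hk := key t
            rw [hct t] at hk
            have h1 : A (m + t) = (-evalP σ a t m r) * (evalP σ a t m q)⁻¹ := by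
              have h2 : A (m + t) * evalP σ a t m q = -evalP σ a t m r := by
                linear_combination -hk
              rw [← h2, mul_assoc, mul_inv_cancel₀ (hqt t), mul_one]
            rw [hjm, h1]
            exact mul_mem (neg_mem (hevalE r)) (E.inv_mem (hevalE q))
      have hEeq : IntermediateField.adjoin k (Set.range A) = E := by
        apply le_antisymm
        · rw [IntermediateField.adjoin_le_iff]
          rintro _ ⟨j, rfl⟩
          exact hAE j
        · rw [hE, IntermediateField.adjoin_le_iff]
          intro y hy
          obtain ⟨s, _, rfl⟩ := Finset.mem_image.1 (Finset.mem_coe.1 hy)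
          exact IntermediateField.subset_adjoin k (Set.range A) ⟨s, rfl⟩
      rw [hEeq]
      exact IntermediateField.fg_adjoin_finset _
end Core

/-- Let `K` be a field with automorphism `σ` whose fixed field is `k`, let
`a ∈ K` and write `a_j = σ^j(a)`.  If the field `k(a_i : i ≥ 0)` is not finitely generated as
a field extension of `k`, then in the quotient division ring `Q = K(x; σ)` the countable
family `{a x^j : j ≥ 1}` generates a free `k`-subalgebra: all distinct words in these elements
are linearly independent over `k` (i.e. the algebra map from the free `k`-algebra on countably
many generators sending the `j`-th generator to `a x^(j+1)` is injective). -/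
theorem free_subalgebra_on_countably_many_generators
    (k : Type*) [Field k] (K : Type*) [Field K] [Algebra k K]
    (σ : K ≃ₐ[k] K)
    (hfix : ∀ b : K, σ b = b ↔ ∃ c : k, algebraMap k K c = b)
    (a : K)
    (hnfg : ¬ (IntermediateField.adjoin k (Set.range fun n : ℕ => (σ ^ n) a)).FG)
    (Q : Type*) [DivisionRing Q] [Algebra k Q] (i : K →ₐ[k] Q) (x : Q)
    (hQ : IsOreQuotient k K σ.toAlgHom 0 Q i x) :
    Function.Injective ⇑(FreeAlgebra.lift k fun j : ℕ => i a * x ^ (j + 1)) := by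
  classical
  set gens : ℕ → Q := fun j => i a * x ^ (j + 1) with hgens
  set ψ : MonoidAlgebra k (FreeMonoid ℕ) →ₐ[k] Q :=
    (MonoidAlgebra.lift k Q (FreeMonoid ℕ)) (FreeMonoid.lift gens) with hψ
  suffices hinj : Function.Injective ⇑ψ by
    have hcomp : (FreeAlgebra.lift k gens)
        = ψ.comp (FreeAlgebra.equivMonoidAlgebraFreeMonoid (R := k) (X := ℕ)).toAlgHom := by
      apply FreeAlgebra.hom_ext
      funext j
      simp [hψ, FreeAlgebra.equivMonoidAlgebraFreeMonoid]
    rw [hgens] at hcomp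
    rw [hcomp]
    exact hinj.comp (FreeAlgebra.equivMonoidAlgebraFreeMonoid (R := k) (X := ℕ)).injective
  rw [injective_iff_map_eq_zero]
  intro p hp
  -- the image of a single word
  have W_eq : ∀ w : FreeMonoid ℕ,
      (FreeMonoid.lift gens) w = i (wB σ a w.toList) * x ^ wD w.toList := by
    intro w
    have h := word_image σ a i x hQ w.toList
    rwa [FreeMonoid.ofList_toList] at h
  set N : ℕ := (p.coeff.support.sup fun w => wD (FreeMonoid.toList w)) + 1 with hN
  set C : ℕ → K := fun n =>
    ∑ w ∈ p.coeff.support.filter (fun w => wD (FreeMonoid.toList w) = n),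
      p.coeff w • wB σ a (FreeMonoid.toList w) with hC
  have hmapsto : ∀ w ∈ p.coeff.support, wD (FreeMonoid.toList w) ∈ Finset.range N := by
    intro w hw
    rw [Finset.mem_range, hN]
    exact Nat.lt_succ_of_le (Finset.le_sup hw)
  have hsum : ∑ n ∈ Finset.range N, i (C n) * x ^ n = 0 := by
    rw [← hp, hψ, MonoidAlgebra.lift_apply, Finsupp.sum]
    rw [← Finset.sum_fiberwise_of_maps_to hmapsto
      (fun w => p.coeff w • (FreeMonoid.lift gens) w)]
    refine Finset.sum_congr rfl fun n _ => ?_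
    rw [hC]
    rw [map_sum, Finset.sum_mul]
    refine Finset.sum_congr rfl fun w hw => ?_
    have hn : wD (FreeMonoid.toList w) = n := (Finset.mem_filter.1 hw).2
    rw [W_eq w, map_smul, smul_mul_assoc, ← hn]
  have hCzero : ∀ n < N, C n = 0 := hQ.indep N C hsum
  have hpw : ∀ w ∈ p.coeff.support, p.coeff w = 0 := by
    intro w0 hw0
    set n := wD (FreeMonoid.toList w0) with hn
    have hnN : n < N := Finset.mem_range.1 (hmapsto w0 hw0)
    set F := p.coeff.support.filter (fun w => wD (FreeMonoid.toList w) = n) with hF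
    set c : Finset ℕ → k := fun S =>
      ∑ w ∈ F.filter (fun w => wT (FreeMonoid.toList w) = S), p.coeff w with hc
    have hbd : ∀ S : Finset ℕ, ¬S ⊆ Finset.range n → c S = 0 := by
      intro S hS
      rw [hc]
      apply Finset.sum_eq_zero
      intro w hw
      rw [Finset.mem_filter] at hw
      obtain ⟨hwF, hwT⟩ := hw
      rw [hF, Finset.mem_filter] at hwF
      exact absurd (hwT ▸ (hwF.2 ▸ wT_subset_range (FreeMonoid.toList w))) hS
    have hfibers : ∀ w ∈ F, wT (FreeMonoid.toList w) ∈ (Finset.range n).powerset := by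
      intro w hw
      rw [Finset.mem_powerset]
      rw [hF, Finset.mem_filter] at hw
      exact hw.2 ▸ wT_subset_range (FreeMonoid.toList w)
    have hev : evalP σ a 0 n c = 0 := by
      rw [evalP]
      have h1 : ∀ S ∈ (Finset.range n).powerset,
          c S • ∏ s ∈ S, (σ ^ (s + 0)) a
            = ∑ w ∈ F.filter (fun w => wT (FreeMonoid.toList w) = S),
                p.coeff w • wB σ a (FreeMonoid.toList w) := by
        intro S _
        rw [hc, Finset.sum_smul]
        refine Finset.sum_congr rfl fun w hw => ?_
        have hwT : wT (FreeMonoid.toList w) = S := (Finset.mem_filter.1 hw).2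
        rw [wB_eq_prod, ← hwT]
        congr 1
      rw [Finset.sum_congr rfl h1,
        Finset.sum_fiberwise_of_maps_to hfibers
          (fun w => p.coeff w • wB σ a (FreeMonoid.toList w))]
      have : ∑ w ∈ F, p.coeff w • wB σ a (FreeMonoid.toList w) = C n := by rw [hC, hF]
      rw [this]
      exact hCzero n hnN
    have hall := core_lemma σ a hnfg n c hbd hev (wT (FreeMonoid.toList w0))
    have hsingle : F.filter (fun w => wT (FreeMonoid.toList w) = wT (FreeMonoid.toList w0))
        = {w0} := by
      ext w
      simp only [Finset.mem_filter, Finset.mem_singleton, hF]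
      constructor
      · rintro ⟨⟨hws, hwD⟩, hwT⟩
        have : FreeMonoid.toList w = FreeMonoid.toList w0 :=
          wT_wD_inj _ _ (by rw [hwD, hn]) hwT
        exact FreeMonoid.toList.injective this
      · rintro rfl
        exact ⟨⟨hw0, hn.symm⟩, rfl⟩
    have hall' : ∑ w ∈ F.filter
        (fun w => wT (FreeMonoid.toList w) = wT (FreeMonoid.toList w0)), p.coeff w = 0 := hall
    rw [hsingle, Finset.sum_singleton] at hall'
    exact hall'
  have : p.coeff.support = ∅ := by
    by_contra h
    obtain ⟨w, hw⟩ := Finset.nonempty_iff_ne_empty.2 h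
    exact (Finsupp.mem_support_iff.1 hw) (hpw w hw)
  exact MonoidAlgebra.coeff_eq_zero.1 (Finsupp.support_eq_empty.1 this)
end
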